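/- arXiv:2207.03004 — 5 statements merged into one kernel-verified Lean document; each statement's English description precedes it below -/
import Mathlib

section
/- Let S be a standard semigroup in ℤ^d, let T_• = {T_q} be a p-system of ideals in S, and let H be a truncating halfspace for Cone(S). Then for every ε > 0 there exists q₀ such that for every power q = p^e of p with q ≥ q₀, the limit lim_{e'→∞} #((p^{e'}·T_q + S) ∩ p^{e'}qH)/(p^{e'd} q^d) exists and is at least Vol_{ℝ^d}(Δ(S, T_•) ∩ H) − ε. -/
/-!
Statement 1 (Fujita-type approximation for `p`-systems): for a standard semigroup `S` in `ℤ^d`,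
a `p`-system `T_•` in `S` and a truncating halfspace `H` for `Cone(S)`, for every `ε > 0`
there is `q₀` such that for all `q = p^{e'} ≥ q₀`, the limit
`lim_{e→∞} #((p^e T_q + S) ∩ p^e q H)/(p^{ed} q^d)` exists and is `≥ Vol(Δ(S,T_•) ∩ H) − ε`.
-/

open Filter MeasureTheory

noncomputable section

/-- The coercion of an integer vector to a real vector. -/
def zr {d : ℕ} (u : Fin d → ℤ) : Fin d → ℝ := fun i => (u i : ℝ)

/-- Inner product of `a : ℝ^d` with an integer vector. -/
def aip {d : ℕ} (a : Fin d → ℝ) (u : Fin d → ℤ) : ℝ := ∑ i, a i * (u i : ℝ)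

/-- Inner product of two real vectors. -/
def rip {d : ℕ} (a u : Fin d → ℝ) : ℝ := ∑ i, a i * u i

/-- `Cone(S)`: the closure of the set of all `ℝ_{≥0}`-linear combinations of elements of `S`. -/
def coneOf {d : ℕ} (S : Set (Fin d → ℤ)) : Set (Fin d → ℝ) :=
  closure {x | ∃ (n : ℕ) (c : Fin n → ℝ) (v : Fin n → Fin d → ℤ),
    (∀ i, 0 ≤ c i) ∧ (∀ i, v i ∈ S) ∧ x = ∑ i, c i • zr (v i)}

/-- `S` is a standard semigroup in `ℤ^d`, with pointedness of `Cone(S)` witnessed by the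
vector `a`: `S` is a subsemigroup containing `0`, `S - S = ℤ^d`, and `⟨a,u⟩ > 0` for every
nonzero `u ∈ Cone(S)`. -/
structure IsStdSemigroup {d : ℕ} (S : Set (Fin d → ℤ)) (a : Fin d → ℝ) : Prop where
  zero_mem : (0 : Fin d → ℤ) ∈ S
  add_mem : ∀ u ∈ S, ∀ v ∈ S, u + v ∈ S
  sub_eq : ∀ w : Fin d → ℤ, ∃ u ∈ S, ∃ v ∈ S, w = u - v
  pointed : ∀ x ∈ coneOf S, x ≠ 0 → 0 < rip a x


open Metric Set Pointwise
open scoped ENNReal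

section aux

variable {d : ℕ} {S : Set (Fin d → ℤ)} {a : Fin d → ℝ}

def preC (S : Set (Fin d → ℤ)) : Set (Fin d → ℝ) :=
  {x | ∃ (n : ℕ) (c : Fin n → ℝ) (v : Fin n → Fin d → ℤ),
    (∀ i, 0 ≤ c i) ∧ (∀ i, v i ∈ S) ∧ x = ∑ i, c i • zr (v i)}

lemma coneOf_eq : coneOf S = closure (preC S) := rfl

lemma zr_add (u v : Fin d → ℤ) : zr (u + v) = zr u + zr v := by
  funext i; simp [zr]
lemma zr_zsmul (n : ℤ) (u : Fin d → ℤ) : zr (n • u) = (n : ℝ) • zr u := by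
  funext i; simp [zr]
lemma zr_sub (u v : Fin d → ℤ) : zr (u - v) = zr u - zr v := by
  funext i; simp [zr]
lemma zr_sum {ι : Type*} (F : Finset ι) (f : ι → Fin d → ℤ) :
    zr (∑ i ∈ F, f i) = ∑ i ∈ F, zr (f i) := by
  funext j
  simp [zr, Finset.sum_apply]

lemma rip_zr (u : Fin d → ℤ) : rip a (zr u) = aip a u := rfl
lemma rip_add (x y : Fin d → ℝ) : rip a (x + y) = rip a x + rip a y := by
  simp [rip, mul_add, Finset.sum_add_distrib]
lemma rip_smul (c : ℝ) (x : Fin d → ℝ) : rip a (c • x) = c * rip a x := by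
  simp only [rip, Pi.smul_apply, smul_eq_mul, Finset.mul_sum]
  exact Finset.sum_congr rfl fun i _ => by ring
lemma rip_sub (x y : Fin d → ℝ) : rip a (x - y) = rip a x - rip a y := by
  simp [rip, mul_sub, Finset.sum_sub_distrib]
lemma rip_continuous : Continuous (rip a) := by
  unfold rip; fun_prop
lemma rip_dist_le (x y : Fin d → ℝ) : |rip a x - rip a y| ≤ (∑ i, |a i|) * dist x y := by
  rw [← rip_sub]
  calc |∑ i, a i * (x - y) i| ≤ ∑ i, |a i * (x - y) i| := Finset.abs_sum_le_sum_abs _ _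
    _ ≤ ∑ i, |a i| * dist x y := by
        refine Finset.sum_le_sum fun i _ => ?_
        rw [abs_mul]
        refine mul_le_mul_of_nonneg_left ?_ (abs_nonneg _)
        have := dist_le_pi_dist x y i
        simpa [Real.dist_eq] using this
    _ = (∑ i, |a i|) * dist x y := by rw [Finset.sum_mul]

lemma preC_zero : (0 : Fin d → ℝ) ∈ preC S := ⟨0, ![], ![], by simp, by simp, by simp⟩

lemma preC_zr {s : Fin d → ℤ} (hs : s ∈ S) : zr s ∈ preC S :=
  ⟨1, ![1], ![s], by simp [Fin.forall_fin_one], by simp [Fin.forall_fin_one, hs], by simp⟩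

lemma preC_add {x y : Fin d → ℝ} (hx : x ∈ preC S) (hy : y ∈ preC S) : x + y ∈ preC S := by
  obtain ⟨n, c, v, hc, hv, rfl⟩ := hx
  obtain ⟨m, c', v', hc', hv', rfl⟩ := hy
  refine ⟨n + m, Fin.append c c', Fin.append v v', ?_, ?_, ?_⟩
  · intro i
    refine Fin.addCases (fun j => ?_) (fun j => ?_) i
    · simpa using hc j
    · simpa using hc' j
  · intro i
    refine Fin.addCases (fun j => ?_) (fun j => ?_) i
    · simpa using hv j
    · simpa using hv' j
  · rw [Fin.sum_univ_add]
    congr 1 <;> refine Finset.sum_congr rfl fun i _ => ?_ <;> simp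

lemma preC_smul {c : ℝ} (hc : 0 ≤ c) {x : Fin d → ℝ} (hx : x ∈ preC S) : c • x ∈ preC S := by
  obtain ⟨n, co, v, hco, hv, rfl⟩ := hx
  exact ⟨n, fun i => c * co i, v, fun i => mul_nonneg hc (hco i), hv, by
    rw [Finset.smul_sum]; refine Finset.sum_congr rfl fun i _ => by rw [smul_smul]⟩

lemma preC_convex : Convex ℝ (preC S) := by
  intro x hx y hy s t hs ht _
  exact preC_add (preC_smul hs hx) (preC_smul ht hy)

lemma coneOf_closed : IsClosed (coneOf S) := isClosed_closure
lemma coneOf_convex : Convex ℝ (coneOf S) := preC_convex.closure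
lemma coneOf_zr {s : Fin d → ℤ} (hs : s ∈ S) : zr s ∈ coneOf S :=
  subset_closure (preC_zr hs)
lemma coneOf_zero : (0 : Fin d → ℝ) ∈ coneOf S := subset_closure preC_zero

lemma coneOf_smul {c : ℝ} (hc : 0 ≤ c) {x : Fin d → ℝ} (hx : x ∈ coneOf S) :
    c • x ∈ coneOf S := by
  have : Continuous fun y : Fin d → ℝ => c • y := by fun_prop
  have h2 := image_closure_subset_closure_image (s := preC S) this
  have : c • x ∈ (fun y : Fin d → ℝ => c • y) '' closure (preC S) := ⟨x, hx, rfl⟩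
  refine closure_mono ?_ (h2 this)
  rintro y ⟨z, hz, rfl⟩
  exact preC_smul hc hz

lemma coneOf_add {x y : Fin d → ℝ} (hx : x ∈ coneOf S) (hy : y ∈ coneOf S) :
    x + y ∈ coneOf S := by
  rw [coneOf_eq, mem_closure_iff_seq_limit] at hx hy ⊢
  obtain ⟨f, hf, hfx⟩ := hx
  obtain ⟨g, hg, hgy⟩ := hy
  exact ⟨fun n => f n + g n, fun n => preC_add (hf n) (hg n), hfx.add hgy⟩

lemma cone_norm_bound (hS : IsStdSemigroup S a) :
    ∃ c > 0, ∀ x ∈ coneOf S, c * ‖x‖ ≤ rip a x := by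
  by_cases hK : (coneOf S ∩ sphere (0 : Fin d → ℝ) 1).Nonempty
  · have hcomp : IsCompact (coneOf S ∩ sphere (0 : Fin d → ℝ) 1) :=
      (isCompact_sphere _ _).inter_left coneOf_closed
    obtain ⟨z, hz, hzmin⟩ := hcomp.exists_isMinOn hK rip_continuous.continuousOn
    have hz1 : ‖z‖ = 1 := by simpa using hz.2
    have hzne : z ≠ 0 := by intro h; rw [h] at hz1; simp at hz1
    have hc : 0 < rip a z := hS.pointed z hz.1 hzne
    refine ⟨rip a z, hc, fun x hx => ?_⟩
    rcases eq_or_ne x 0 with rfl | hxne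
    · simp [rip]
    · have hnx : (0 : ℝ) < ‖x‖ := norm_pos_iff.2 hxne
      have hmem : ‖x‖⁻¹ • x ∈ coneOf S ∩ sphere (0 : Fin d → ℝ) 1 := by
        refine ⟨coneOf_smul (by positivity) hx, ?_⟩
        simp [norm_smul, abs_of_pos (inv_pos.2 hnx), inv_mul_cancel₀ hnx.ne']
      have := hzmin hmem
      simp only [Set.mem_setOf_eq] at this
      rw [rip_smul (a := a)] at this
      have h2 : rip a z * ‖x‖ ≤ (‖x‖⁻¹ * rip a x) * ‖x‖ :=
        mul_le_mul_of_nonneg_right this hnx.le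
      calc rip a z * ‖x‖ ≤ (‖x‖⁻¹ * rip a x) * ‖x‖ := h2
        _ = rip a x := by field_simp
  · refine ⟨1, one_pos, fun x hx => ?_⟩
    rcases eq_or_ne x 0 with rfl | hxne
    · simp [rip]
    · exfalso
      have hnx : (0 : ℝ) < ‖x‖ := norm_pos_iff.2 hxne
      exact hK ⟨‖x‖⁻¹ • x, coneOf_smul (by positivity) hx, by
        simp [norm_smul, abs_of_pos (inv_pos.2 hnx), inv_mul_cancel₀ hnx.ne']⟩

lemma finite_lattice_ball (R : ℝ) : {u : Fin d → ℤ | ‖zr u‖ ≤ R}.Finite := by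
  have : {u : Fin d → ℤ | ‖zr u‖ ≤ R} ⊆
      Set.pi Set.univ fun _ : Fin d => {k : ℤ | |(k : ℝ)| ≤ R} := by
    intro u hu i _
    have h1 : ‖zr u i‖ ≤ ‖zr u‖ := norm_le_pi_norm (zr u) i
    exact le_trans (by simpa [zr] using h1) hu
  refine Set.Finite.subset (Set.Finite.pi fun i => ?_) this
  have : {k : ℤ | |(k : ℝ)| ≤ R} ⊆ Set.Icc (-⌈R⌉) ⌈R⌉ := by
    intro k hk
    simp only [Set.mem_setOf_eq, abs_le] at hk
    have hR : R ≤ (⌈R⌉ : ℝ) := Int.le_ceil R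
    constructor
    · exact_mod_cast (by linarith : -(⌈R⌉:ℝ) ≤ (k:ℝ))
    · exact_mod_cast (by linarith : (k:ℝ) ≤ (⌈R⌉:ℝ))
  exact (Set.finite_Icc _ _).subset this

lemma finite_lattice_cone (hS : IsStdSemigroup S a) (γ : ℝ) :
    {u : Fin d → ℤ | zr u ∈ coneOf S ∧ aip a u < γ}.Finite := by
  obtain ⟨c, hc, hbd⟩ := cone_norm_bound hS
  refine (finite_lattice_ball (γ / c)).subset ?_
  intro u ⟨h1, h2⟩
  have := hbd _ h1
  rw [rip_zr] at this
  rw [Set.mem_setOf_eq, le_div_iff₀ hc, mul_comm]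
  nlinarith

end aux

def coneFin {d : ℕ} (G : Finset (Fin d → ℤ)) : Set (Fin d → ℝ) :=
  {x | ∃ c : (Fin d → ℤ) → ℝ, (∀ g, 0 ≤ c g) ∧ x = ∑ g ∈ G, c g • zr g}

section aux2
variable {d : ℕ} {S : Set (Fin d → ℤ)} {a : Fin d → ℝ}

lemma coneFin_add {G : Finset (Fin d → ℤ)} {x y : Fin d → ℝ}
    (hx : x ∈ coneFin G) (hy : y ∈ coneFin G) : x + y ∈ coneFin G := by
  obtain ⟨c, hc, rfl⟩ := hx
  obtain ⟨c', hc', rfl⟩ := hy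
  exact ⟨c + c', fun g => add_nonneg (hc g) (hc' g), by
    rw [← Finset.sum_add_distrib]
    exact Finset.sum_congr rfl fun g _ => by simp [add_smul]⟩

lemma coneFin_smul {G : Finset (Fin d → ℤ)} {t : ℝ} (ht : 0 ≤ t) {x : Fin d → ℝ}
    (hx : x ∈ coneFin G) : t • x ∈ coneFin G := by
  obtain ⟨c, hc, rfl⟩ := hx
  exact ⟨fun g => t * c g, fun g => mul_nonneg ht (hc g), by
    rw [Finset.smul_sum]; exact Finset.sum_congr rfl fun g _ => by rw [smul_smul]⟩

lemma coneFin_zero {G : Finset (Fin d → ℤ)} : (0 : Fin d → ℝ) ∈ coneFin G :=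
  ⟨0, fun g => le_refl 0, by simp⟩

lemma coneFin_convex {G : Finset (Fin d → ℤ)} : Convex ℝ (coneFin G) := by
  intro x hx y hy s t hs ht _
  exact coneFin_add (coneFin_smul hs hx) (coneFin_smul ht hy)

lemma coneFin_mono {G G' : Finset (Fin d → ℤ)} (h : G ⊆ G') : coneFin G ⊆ coneFin G' := by
  rintro x ⟨c, hc, rfl⟩
  classical
  refine ⟨fun g => if g ∈ G then c g else 0, fun g => ?_, ?_⟩
  · by_cases hg : g ∈ G <;> simp [hg, hc g]
  · have : ∀ g ∈ G', (fun g => if g ∈ G then c g else 0) g • zr g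
        = if g ∈ G then c g • zr g else 0 := by
      intro g _
      by_cases hg : g ∈ G <;> simp [hg]
    rw [Finset.sum_congr rfl this, Finset.sum_ite_mem, Finset.inter_eq_right.2 h]

lemma coneFin_sum_mem {G : Finset (Fin d → ℤ)} {ι : Type*} (F : Finset ι) (f : ι → Fin d → ℝ)
    (hf : ∀ i ∈ F, f i ∈ coneFin G) : ∑ i ∈ F, f i ∈ coneFin G := by
  classical
  induction F using Finset.induction with
  | empty => simpa using coneFin_zero
  | insert _ _ hni ih =>
    rw [Finset.sum_insert hni]
    exact coneFin_add (hf _ (Finset.mem_insert_self _ _))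
      (ih fun i hi => hf i (Finset.mem_insert_of_mem hi))

lemma preC_subset_coneFin {x : Fin d → ℝ} (hx : x ∈ preC S) :
    ∃ G : Finset (Fin d → ℤ), ↑G ⊆ S ∧ x ∈ coneFin G := by
  classical
  obtain ⟨n, c, v, hc, hv, rfl⟩ := hx
  refine ⟨Finset.image v Finset.univ, ?_, ?_⟩
  · intro g hg
    simp only [Finset.coe_image, Set.mem_image] at hg
    obtain ⟨i, _, rfl⟩ := hg
    exact hv i
  · refine ⟨fun g => ∑ i ∈ Finset.univ.filter fun i => v i = g, c i,
      fun g => Finset.sum_nonneg fun i _ => hc i, ?_⟩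
    rw [← Finset.sum_fiberwise_of_maps_to (g := v) (t := Finset.image v Finset.univ)
      (fun i _ => Finset.mem_image_of_mem v (Finset.mem_univ i)) (fun i => c i • zr (v i))]
    refine Finset.sum_congr rfl fun g _ => ?_
    rw [Finset.sum_smul]
    refine Finset.sum_congr rfl fun j hj => ?_
    simp only [Finset.mem_filter] at hj
    rw [hj.2]

lemma sum_mem_S (hS : IsStdSemigroup S a) {ι : Type*} (F : Finset ι) (f : ι → Fin d → ℤ)
    (hf : ∀ i ∈ F, f i ∈ S) : ∑ i ∈ F, f i ∈ S := by
  classical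
  induction F using Finset.induction with
  | empty => simpa using hS.zero_mem
  | insert _ _ hni ih =>
    rw [Finset.sum_insert hni]
    exact hS.add_mem _ (hf _ (Finset.mem_insert_self _ _)) _
      (ih fun i hi => hf i (Finset.mem_insert_of_mem hi))

lemma nsmul_mem_S (hS : IsStdSemigroup S a) {u : Fin d → ℤ} (hu : u ∈ S) (n : ℕ) :
    n • u ∈ S := by
  induction n with
  | zero => simpa using hS.zero_mem
  | succ k ih =>
    have : (k + 1) • u = k • u + u := by rw [add_smul, one_smul]
    rw [this]
    exact hS.add_mem _ ih _ hu

lemma shift_lemma (hS : IsStdSemigroup S a) (G : Finset (Fin d → ℤ)) (hG : ↑G ⊆ S) :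
    ∃ x₀ : Fin d → ℤ, ∀ w : Fin d → ℤ, zr w ∈ coneFin G → w + x₀ ∈ S := by
  classical
  set RG : ℝ := ∑ g ∈ G, ‖zr g‖ with hRG
  have hDfin : {r : Fin d → ℤ | ‖zr r‖ ≤ RG}.Finite := finite_lattice_ball RG
  set D : Finset (Fin d → ℤ) := hDfin.toFinset with hD
  -- for each r, choose v r ∈ S with r + v r ∈ S
  have hchoice : ∀ r : Fin d → ℤ, ∃ v : Fin d → ℤ, v ∈ S ∧ r + v ∈ S := by
    intro r
    obtain ⟨u, hu, v, hv, huv⟩ := hS.sub_eq r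
    exact ⟨v, hv, by rw [huv, sub_add_cancel]; exact hu⟩
  choose vv hvvS hvvadd using hchoice
  refine ⟨∑ r ∈ D, vv r, ?_⟩
  rintro w ⟨c, hc, hw⟩
  -- the integer part
  set w' : Fin d → ℤ := ∑ g ∈ G, ⌊c g⌋.toNat • g with hw'
  have hw'S : w' ∈ S ∨ w' = 0 := by
    left
    exact sum_mem_S hS G _ fun g hg => nsmul_mem_S hS (hG hg) _
  set r : Fin d → ℤ := w - w' with hr
  have hzrw' : zr w' = ∑ g ∈ G, (⌊c g⌋ : ℝ) • zr g := by
    rw [hw', zr_sum]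
    refine Finset.sum_congr rfl fun g hg => ?_
    have h1 : ∀ m : ℕ, zr (m • g) = (m : ℝ) • zr g := fun m => by funext i; simp [zr]
    rw [h1]
    congr 1
    have h2 : (0 : ℤ) ≤ ⌊c g⌋ := Int.floor_nonneg.2 (hc g)
    exact_mod_cast congrArg (fun z : ℤ => (z : ℝ)) (Int.toNat_of_nonneg h2)
  have hrB : ‖zr r‖ ≤ RG := by
    have : zr r = ∑ g ∈ G, (c g - ⌊c g⌋) • zr g := by
      rw [hr, zr_sub, hw, hzrw', ← Finset.sum_sub_distrib]
      exact Finset.sum_congr rfl fun g _ => by rw [sub_smul]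
    rw [this, hRG]
    refine le_trans (norm_sum_le _ _) (Finset.sum_le_sum fun g _ => ?_)
    rw [norm_smul]
    have h0 : 0 ≤ c g - ⌊c g⌋ := sub_nonneg.2 (Int.floor_le _)
    have h1 : c g - ⌊c g⌋ ≤ 1 := by
      have := Int.lt_floor_add_one (c g); linarith
    calc ‖c g - (⌊c g⌋:ℝ)‖ * ‖zr g‖ ≤ 1 * ‖zr g‖ := by
          refine mul_le_mul_of_nonneg_right ?_ (norm_nonneg _)
          rw [Real.norm_eq_abs, abs_of_nonneg h0]; exact h1
      _ = ‖zr g‖ := one_mul _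
  have hrD : r ∈ D := by
    rw [hD, Set.Finite.mem_toFinset]
    exact hrB
  -- w + x₀ = w' + (r + vv r) + ∑ over D.erase r
  have key : w + ∑ r' ∈ D, vv r' = w' + ((r + vv r) + ∑ r' ∈ D.erase r, vv r') := by
    rw [← Finset.add_sum_erase D vv hrD]
    rw [hr]
    abel
  rw [key]
  rcases hw'S with h | h
  · exact hS.add_mem _ h _ (hS.add_mem _ (hvvadd r) _
      (sum_mem_S hS _ _ fun r' _ => hvvS r'))
  · rw [h, zero_add]
    exact hS.add_mem _ (hvvadd r) _ (sum_mem_S hS _ _ fun r' _ => hvvS r')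

end aux2

section aux3
variable {d : ℕ} {S : Set (Fin d → ℤ)} {a : Fin d → ℝ}

lemma single_sum (v : Fin d → ℝ) : ∑ i, v i • (Pi.single i (1:ℝ) : Fin d → ℝ) = v := by
  classical
  funext k
  rw [Finset.sum_apply]
  have hterm : ∀ i, (v i • (Pi.single i (1:ℝ) : Fin d → ℝ)) k = if i = k then v i else 0 := by
    intro i
    rcases eq_or_ne i k with rfl | h
    · simp
    · simp [Pi.single_apply, h, Ne.symm h]
  rw [Finset.sum_congr rfl fun i _ => hterm i, Finset.sum_ite_eq' Finset.univ k v]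
  simp

set_option maxHeartbeats 1000000 in
lemma interior_subcone (hS : IsStdSemigroup S a) {x : Fin d → ℝ}
    (hx : x ∈ interior (coneOf S)) :
    ∃ (G : Finset (Fin d → ℤ)) (δ : ℝ), ↑G ⊆ S ∧ 0 < δ ∧ ball x (2 * δ) ⊆ coneFin G := by
  classical
  rcases Nat.eq_zero_or_pos d with hd | hd
  · subst hd
    haveI : Subsingleton (Fin 0 → ℝ) := ⟨fun f g => funext fun i => i.elim0⟩
    refine ⟨{0}, 1, ?_, one_pos, ?_⟩
    · intro g hg
      simp only [Finset.coe_singleton, Set.mem_singleton_iff] at hg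
      rw [hg]; exact hS.zero_mem
    · intro z _
      refine ⟨fun _ => 0, fun _ => le_refl 0, ?_⟩
      apply Subsingleton.elim
  obtain ⟨r, hr, hball⟩ := Metric.isOpen_iff.1 isOpen_interior x hx
  have hballC : ball x r ⊆ coneOf S := hball.trans interior_subset
  set ρ : ℝ := r / 2 with hρdef
  have hρ : 0 < ρ := by positivity
  have hdR : (0:ℝ) < d := by exact_mod_cast hd
  set η : ℝ := ρ / (2 * d) with hηdef
  have hη : 0 < η := by positivity
  set δ : ℝ := ρ / (8 * d) with hδdef
  have hδ : 0 < δ := by positivity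
  set y : Fin d × Bool → Fin d → ℝ :=
    fun j => x + (if j.2 then ρ else -ρ) • (Pi.single j.1 (1:ℝ) : Fin d → ℝ) with hy
  have hyC : ∀ j, y j ∈ coneOf S := by
    intro j
    apply hballC
    have hdy : dist (y j) x = |if j.2 then ρ else -ρ| := by
      rw [hy]
      simp only [dist_eq_norm, add_sub_cancel_left, norm_smul, Pi.norm_single]
      simp [Real.norm_eq_abs]
    rw [Metric.mem_ball, hdy]
    rcases j.2 <;> simp [abs_of_pos hρ, hρdef, abs_of_pos (half_pos hr)] <;> linarith
  have hy' : ∀ j, ∃ y' ∈ preC S, dist (y j) y' < η := by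
    intro j
    have h := hyC j
    rw [coneOf_eq, Metric.mem_closure_iff] at h
    exact h η hη
  choose y' hy'pre hy'dist using hy'
  have hGj : ∀ j, ∃ G : Finset (Fin d → ℤ), ↑G ⊆ S ∧ y' j ∈ coneFin G :=
    fun j => preC_subset_coneFin (hy'pre j)
  choose Gj hGjS hGjmem using hGj
  set G : Finset (Fin d → ℤ) := Finset.univ.biUnion Gj with hG
  have hGS : ↑G ⊆ S := by
    intro g hg
    simp only [hG, Finset.coe_biUnion, Finset.mem_coe, Finset.mem_univ, Set.iUnion_true,
      Set.mem_iUnion] at hg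
    obtain ⟨j, hj⟩ := hg
    exact hGjS j hj
  have hy'G : ∀ j, y' j ∈ coneFin G :=
    fun j => coneFin_mono (Finset.subset_biUnion_of_mem Gj (Finset.mem_univ j)) (hGjmem j)
  set Q : Set (Fin d → ℝ) :=
    (fun μ : Fin d × Bool → ℝ => ∑ j, μ j • y' j) '' stdSimplex ℝ (Fin d × Bool) with hQ
  have hQcont : Continuous fun μ : Fin d × Bool → ℝ => ∑ j, μ j • y' j :=
    continuous_finset_sum _ fun j _ => (continuous_apply j).smul continuous_const
  have hQcompact : IsCompact Q := (isCompact_stdSimplex ℝ _).image hQcont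
  have hQclosed : IsClosed Q := hQcompact.isClosed
  have hQconvex : Convex ℝ Q := by
    refine (convex_stdSimplex ℝ _).is_linear_image ⟨?_, ?_⟩
    · intro μ ν
      rw [← Finset.sum_add_distrib]
      exact Finset.sum_congr rfl fun j _ => by simp [add_smul]
    · intro c μ
      rw [Finset.smul_sum]
      exact Finset.sum_congr rfl fun j _ => by simp [smul_smul]
  have hQsub : Q ⊆ coneFin G := by
    rintro _ ⟨μ, hμ, rfl⟩
    exact coneFin_sum_mem _ _ fun j _ => coneFin_smul (hμ.1 j) (hy'G j)
  have hy'Q : ∀ j, y' j ∈ Q := by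
    intro j
    refine ⟨fun k => if k = j then 1 else 0, ⟨fun k => by positivity, by simp⟩, ?_⟩
    simp [ite_smul]
  have claim1 : ∀ z : Fin d → ℝ, dist z x ≤ ρ / d →
      ∃ μ : Fin d × Bool → ℝ, (∀ j, 0 ≤ μ j) ∧ (∑ j, μ j) = 1 ∧ z = ∑ j, μ j • y j := by
    intro z hz
    set v : Fin d → ℝ := z - x with hv
    have hvi : ∀ i, |v i| ≤ ρ / d := by
      intro i
      have h1 := dist_le_pi_dist z x i
      rw [Real.dist_eq] at h1
      exact le_trans h1 hz
    have hsum : ∑ i, |v i| ≤ ρ := by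
      calc ∑ i, |v i| ≤ ∑ _i : Fin d, ρ / d := Finset.sum_le_sum fun i _ => hvi i
        _ = d * (ρ / d) := by rw [Finset.sum_const]; simp [mul_comm]
        _ = ρ := by field_simp
    set c₀ : ℝ := (1 - (∑ i, |v i|) / ρ) / (2 * d) with hc₀
    have hc₀0 : 0 ≤ c₀ := by
      have h2 : (∑ i, |v i|) / ρ ≤ 1 := by rw [div_le_one hρ]; exact hsum
      rw [hc₀]
      have h2' : 0 ≤ 1 - (∑ i, |v i|) / ρ := by linarith
      positivity
    set μ : Fin d × Bool → ℝ :=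
      fun j => (if j.2 then max (v j.1) 0 else max (-(v j.1)) 0) / ρ + c₀ with hμdef
    have hmaxsum : ∀ i : Fin d, max (v i) 0 + max (-(v i)) 0 = |v i| := by
      intro i
      rcases le_or_gt 0 (v i) with h | h
      · rw [max_eq_left h, max_eq_right (by linarith), abs_of_nonneg h, add_zero]
      · rw [max_eq_right h.le, max_eq_left (by linarith), abs_of_neg h, zero_add]
    have hmaxsub : ∀ i : Fin d, max (v i) 0 - max (-(v i)) 0 = v i := by
      intro i
      rcases le_or_gt 0 (v i) with h | h
      · rw [max_eq_left h, max_eq_right (by linarith)]; ring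
      · rw [max_eq_right h.le, max_eq_left (by linarith)]; ring
    have hμ0 : ∀ j, 0 ≤ μ j := by
      intro j
      have h3 : (0:ℝ) ≤ (if j.2 then max (v j.1) 0 else max (-(v j.1)) 0) := by
        rcases j.2 <;> simp [le_max_iff]
      have h3' : 0 ≤ (if j.2 then max (v j.1) 0 else max (-(v j.1)) 0) / ρ :=
        div_nonneg h3 hρ.le
      rw [hμdef]
      exact add_nonneg h3' hc₀0
    have hμsum : (∑ j, μ j) = 1 := by
      rw [Fintype.sum_prod_type]
      have hred : ∀ i : Fin d, (∑ b, μ (i, b)) = |v i| / ρ + 2 * c₀ := by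
        intro i
        rw [Fintype.sum_bool]
        show (max (v i) 0 / ρ + c₀) + (max (-(v i)) 0 / ρ + c₀) = _
        have := hmaxsum i
        field_simp
        linarith
      rw [Finset.sum_congr rfl fun i _ => hred i, Finset.sum_add_distrib,
        Finset.sum_const, ← Finset.sum_div]
      simp only [Finset.card_univ, Fintype.card_fin, nsmul_eq_mul]
      rw [hc₀]
      field_simp
      ring
    refine ⟨μ, hμ0, hμsum, ?_⟩
    have expand : ∑ j, μ j • y j
        = (∑ j, μ j) • x + ∑ i, v i • (Pi.single i (1:ℝ) : Fin d → ℝ) := by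
      rw [Finset.sum_smul, Fintype.sum_prod_type, Fintype.sum_prod_type,
        ← Finset.sum_add_distrib]
      refine Finset.sum_congr rfl fun i _ => ?_
      rw [Fintype.sum_bool, Fintype.sum_bool]
      have hyt : y (i, true) = x + ρ • (Pi.single i (1:ℝ) : Fin d → ℝ) := by
        simp only [hy]
        norm_num
      have hyf : y (i, false) = x + (-ρ) • (Pi.single i (1:ℝ) : Fin d → ℝ) := by
        simp only [hy]
        norm_num
      have hμt : μ (i, true) = max (v i) 0 / ρ + c₀ := rfl
      have hμf : μ (i, false) = max (-(v i)) 0 / ρ + c₀ := rfl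
      rw [hyt, hyf, hμt, hμf]
      have lhs_eq : (max (v i) 0 / ρ + c₀) • (x + ρ • (Pi.single i (1:ℝ) : Fin d → ℝ))
          + (max (-(v i)) 0 / ρ + c₀) • (x + (-ρ) • (Pi.single i (1:ℝ) : Fin d → ℝ))
          = ((max (v i) 0 / ρ + c₀) • x + (max (-(v i)) 0 / ρ + c₀) • x)
            + ((max (v i) 0 / ρ + c₀) * ρ - (max (-(v i)) 0 / ρ + c₀) * ρ)
              • (Pi.single i (1:ℝ) : Fin d → ℝ) := by
        module
      rw [lhs_eq]
      have h5 : (max (v i) 0 / ρ + c₀) * ρ - (max (-(v i)) 0 / ρ + c₀) * ρ = v i := by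
        have h := hmaxsub i
        have hexp : (max (v i) 0 / ρ + c₀) * ρ - (max (-(v i)) 0 / ρ + c₀) * ρ
            = (max (v i) 0 - max (-(v i)) 0) * (ρ / ρ) := by ring
        rw [hexp, div_self hρ.ne', mul_one, h]
      rw [h5]
    rw [expand, hμsum, one_smul, single_sum, hv]
    abel
  -- Claim 2 : the ball of radius 2δ is inside Q
  have claim2 : ball x (2 * δ) ⊆ Q := by
    intro z hz
    by_contra hzQ
    obtain ⟨f, u, hfu, huz⟩ := geometric_hahn_banach_closed_point hQconvex hQclosed hzQ
    have hJ : Nonempty (Fin d × Bool) := ⟨⟨⟨0, hd⟩, true⟩⟩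
    rcases eq_or_ne ‖f‖ 0 with hf0 | hfne
    · have hf : ∀ w, f w = 0 := by
        intro w
        have h := f.le_opNorm w
        rw [hf0, zero_mul] at h
        simpa using norm_le_zero_iff.1 h
      obtain ⟨j⟩ := hJ
      have h1 := hfu _ (hy'Q j)
      rw [hf] at h1
      rw [hf] at huz
      linarith
    have hfpos : 0 < ‖f‖ := lt_of_le_of_ne (norm_nonneg f) (Ne.symm hfne)
    -- bound on f over the ball of radius ρ/d
    have sub1 : ∀ w : Fin d → ℝ, ‖w‖ ≤ 1 → f x + (ρ / d) * f w ≤ u + ‖f‖ * η := by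
      intro w hw
      have hmem : dist (x + (ρ / d) • w) x ≤ ρ / d := by
        rw [dist_eq_norm, add_sub_cancel_left, norm_smul, Real.norm_eq_abs,
          abs_of_pos (by positivity : (0:ℝ) < ρ / d)]
        calc (ρ / d) * ‖w‖ ≤ (ρ / d) * 1 :=
              mul_le_mul_of_nonneg_left hw (by positivity)
          _ = ρ / d := mul_one _
      obtain ⟨μ, hμ0, hμsum, hμeq⟩ := claim1 _ hmem
      have hfy : ∀ j, f (y j) ≤ u + ‖f‖ * η := by
        intro j
        have h6 : f (y j) - f (y' j) ≤ ‖f‖ * η := by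
          calc f (y j) - f (y' j) = f (y j - y' j) := by rw [map_sub]
            _ ≤ ‖f (y j - y' j)‖ := le_abs_self _
            _ ≤ ‖f‖ * ‖y j - y' j‖ := f.le_opNorm _
            _ ≤ ‖f‖ * η := by
                refine mul_le_mul_of_nonneg_left ?_ (norm_nonneg f)
                rw [← dist_eq_norm]
                exact (hy'dist j).le
        have h7 := hfu _ (hy'Q j)
        linarith
      have : f (x + (ρ / d) • w) = ∑ j, μ j * f (y j) := by
        rw [hμeq, map_sum]
        exact Finset.sum_congr rfl fun j _ => by
          rw [ContinuousLinearMap.map_smul]; rfl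
      have h8 : f (x + (ρ / d) • w) ≤ u + ‖f‖ * η := by
        rw [this]
        calc ∑ j, μ j * f (y j) ≤ ∑ j, μ j * (u + ‖f‖ * η) :=
              Finset.sum_le_sum fun j _ => mul_le_mul_of_nonneg_left (hfy j) (hμ0 j)
          _ = (∑ j, μ j) * (u + ‖f‖ * η) := by rw [Finset.sum_mul]
          _ = u + ‖f‖ * η := by rw [hμsum, one_mul]
      have h9 : f (x + (ρ / d) • w) = f x + (ρ / d) * f w := by
        rw [map_add, ContinuousLinearMap.map_smul]; rfl
      linarith
    -- operator norm bound
    have hA : 0 ≤ u + ‖f‖ * η - f x := by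
      have := sub1 0 (by simp)
      simpa using this
    have sub2 : ‖f‖ * (ρ / d) ≤ u + ‖f‖ * η - f x := by
      have hc : ‖f‖ ≤ (u + ‖f‖ * η - f x) * (d / ρ) := by
        refine f.opNorm_le_bound (by positivity) fun w => ?_
        rcases eq_or_ne w 0 with rfl | hw0
        · simp
        · have hnw : 0 < ‖w‖ := norm_pos_iff.2 hw0
          have h10 := sub1 (‖w‖⁻¹ • w) (by
            rw [norm_smul, Real.norm_eq_abs, abs_of_pos (by positivity)]
            rw [inv_mul_cancel₀ hnw.ne'])
          have h11 := sub1 (-(‖w‖⁻¹ • w)) (by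
            rw [norm_neg, norm_smul, Real.norm_eq_abs, abs_of_pos (by positivity)]
            rw [inv_mul_cancel₀ hnw.ne'])
          rw [map_neg] at h11
          have h12 : f (‖w‖⁻¹ • w) = ‖w‖⁻¹ * f w := by
            rw [ContinuousLinearMap.map_smul]; rfl
          rw [h12] at h10 h11
          have h13 : (ρ / d) * |‖w‖⁻¹ * f w| ≤ u + ‖f‖ * η - f x := by
            rcases abs_cases (‖w‖⁻¹ * f w) with ⟨he, _⟩ | ⟨he, _⟩ <;> rw [he] <;> linarith
          rw [abs_mul, abs_of_pos (by positivity : (0:ℝ) < ‖w‖⁻¹)] at h13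
          have h14 : |f w| ≤ (u + ‖f‖ * η - f x) * (d / ρ) * ‖w‖ := by
            have hid : |f w| = (d / ρ) * ‖w‖ * ((ρ / d) * (‖w‖⁻¹ * |f w|)) := by
              field_simp
              try ring
            rw [hid]
            calc (d / ρ) * ‖w‖ * ((ρ / d) * (‖w‖⁻¹ * |f w|))
                ≤ (d / ρ) * ‖w‖ * (u + ‖f‖ * η - f x) :=
                  mul_le_mul_of_nonneg_left h13 (by positivity)
              _ = (u + ‖f‖ * η - f x) * (d / ρ) * ‖w‖ := by ring
          simpa [Real.norm_eq_abs] using h14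
      have hρd : (0:ℝ) < ρ / d := by positivity
      calc ‖f‖ * (ρ / d) ≤ ((u + ‖f‖ * η - f x) * (d / ρ)) * (ρ / d) :=
            mul_le_mul_of_nonneg_right hc hρd.le
        _ = u + ‖f‖ * η - f x := by field_simp
    -- conclude
    have hfz : f z ≤ f x + ‖f‖ * (2 * δ) := by
      have heq : f z - f x = f (z - x) := by rw [map_sub]
      have h15 : f (z - x) ≤ ‖f‖ * ‖z - x‖ := le_trans (le_abs_self _) (f.le_opNorm _)
      have h16 : ‖z - x‖ ≤ 2 * δ := by
        rw [← dist_eq_norm]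
        exact (Metric.mem_ball.1 hz).le
      have h17 : ‖f‖ * ‖z - x‖ ≤ ‖f‖ * (2 * δ) :=
        mul_le_mul_of_nonneg_left h16 (norm_nonneg f)
      linarith
    have hsmall : η + 2 * δ < ρ / d := by
      have e1 : η = ρ / d / 2 := by
        rw [hηdef, show (2:ℝ) * d = d * 2 by ring, ← div_div]
      have e2 : δ = ρ / d / 8 := by
        rw [hδdef, show (8:ℝ) * d = d * 8 by ring, ← div_div]
      have hx0 : 0 < ρ / d := by positivity
      rw [e1, e2]
      linarith
    have hcontr : ‖f‖ * (η + 2 * δ) < ‖f‖ * (ρ / d) :=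
      mul_lt_mul_of_pos_left hsmall hfpos
    have hexp : ‖f‖ * (η + 2 * δ) = ‖f‖ * η + ‖f‖ * (2 * δ) := by ring
    linarith [hcontr, hexp, sub2, hfz, huz]
  exact ⟨G, δ, hGS, hδ, claim2.trans hQsub⟩

end aux3

section aux4
variable {d : ℕ} {S : Set (Fin d → ℤ)} {a : Fin d → ℝ}

def flr (n : ℕ) (x : Fin d → ℝ) : Fin d → ℤ := fun i => ⌊(n : ℝ) * x i⌋

def cube (n : ℕ) (u : Fin d → ℤ) : Set (Fin d → ℝ) :=
  Set.pi Set.univ fun i => Ico ((u i : ℝ) / n) (((u i : ℝ) + 1) / n)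

lemma mem_cube_iff {n : ℕ} (hn : 0 < n) {u : Fin d → ℤ} {x : Fin d → ℝ} :
    x ∈ cube n u ↔ ∀ i, (u i : ℝ) ≤ n * x i ∧ n * x i < u i + 1 := by
  have hn' : (0:ℝ) < n := by exact_mod_cast hn
  constructor
  · intro hx i
    have h := hx i (Set.mem_univ i)
    obtain ⟨h1, h2⟩ := h
    rw [div_le_iff₀ hn'] at h1
    rw [lt_div_iff₀ hn'] at h2
    constructor <;> nlinarith
  · intro h i _
    obtain ⟨h1, h2⟩ := h i
    rw [Set.mem_Ico, div_le_iff₀ hn', lt_div_iff₀ hn']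
    constructor <;> nlinarith

lemma mem_cube_flr {n : ℕ} (hn : 0 < n) (x : Fin d → ℝ) : x ∈ cube n (flr n x) := by
  rw [mem_cube_iff hn]
  intro i
  exact ⟨Int.floor_le _, Int.lt_floor_add_one _⟩

lemma cube_eq_flr {n : ℕ} (hn : 0 < n) {u : Fin d → ℤ} {x : Fin d → ℝ} (hx : x ∈ cube n u) :
    u = flr n x := by
  funext i
  rw [mem_cube_iff hn] at hx
  obtain ⟨h1, h2⟩ := hx i
  exact ((Int.floor_eq_iff).2 ⟨h1, by exact_mod_cast h2⟩).symm

lemma cube_volume {n : ℕ} (hn : 0 < n) (u : Fin d → ℤ) :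
    volume (cube n u) = (ENNReal.ofReal ((n : ℝ)⁻¹)) ^ d := by
  have hn' : (0:ℝ) < n := by exact_mod_cast hn
  rw [cube, volume_pi_pi]
  have : ∀ i : Fin d, volume (Ico ((u i : ℝ) / n) (((u i : ℝ) + 1) / n))
      = ENNReal.ofReal ((n : ℝ)⁻¹) := by
    intro i
    rw [Real.volume_Ico]
    congr 1
    field_simp
    ring
  rw [Finset.prod_congr rfl fun i _ => this i, Finset.prod_const]
  simp

lemma cube_dist {n : ℕ} (hn : 0 < n) {u : Fin d → ℤ} {x : Fin d → ℝ} (hx : x ∈ cube n u) :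
    dist x ((n : ℝ)⁻¹ • zr u) ≤ (n : ℝ)⁻¹ := by
  have hn' : (0:ℝ) < n := by exact_mod_cast hn
  rw [dist_pi_le_iff (by positivity)]
  intro i
  rw [mem_cube_iff hn] at hx
  obtain ⟨h1, h2⟩ := hx i
  have hz : ((n : ℝ)⁻¹ • zr u) i = (u i : ℝ) / n := by
    simp [zr, div_eq_inv_mul]
  have e1 : (u i : ℝ)/n ≤ x i := by rw [div_le_iff₀ hn']; nlinarith
  have e2 : x i < ((u i : ℝ)+1)/n := by rw [lt_div_iff₀ hn']; nlinarith
  have e3 : ((u i : ℝ)+1)/n = (u i : ℝ)/n + (n:ℝ)⁻¹ := by field_simp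
  rw [e3] at e2
  rw [Real.dist_eq, hz, abs_le]
  constructor <;> linarith

lemma cube_disjoint {n : ℕ} (hn : 0 < n) :
    Set.PairwiseDisjoint (Set.univ : Set (Fin d → ℤ)) (cube n) := by
  intro u _ v _ huv
  refine Set.disjoint_left.2 fun x hxu hxv => ?_
  exact huv ((cube_eq_flr hn hxu).trans (cube_eq_flr hn hxv).symm)

lemma cube_measurable {n : ℕ} (u : Fin d → ℤ) : MeasurableSet (cube n u) :=
  MeasurableSet.univ_pi fun i => measurableSet_Ico

/-- counting upper bound by volume of a covering region. -/
lemma count_le_vol {n : ℕ} (hn : 0 < n) {X : Set (Fin d → ℤ)} (hX : X.Finite)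
    {Y : Set (Fin d → ℝ)} (hXY : ∀ u ∈ X, cube n u ⊆ Y) :
    (X.ncard : ℝ≥0∞) * (ENNReal.ofReal ((n : ℝ)⁻¹)) ^ d ≤ volume Y := by
  classical
  have hsum : volume (⋃ u ∈ hX.toFinset, cube n u) = ∑ u ∈ hX.toFinset, volume (cube n u) := by
    refine measure_biUnion_finset ?_ fun u _ => cube_measurable u
    exact (cube_disjoint hn).subset (Set.subset_univ _)
  have hcard : ∑ u ∈ hX.toFinset, volume (cube n u)
      = (X.ncard : ℝ≥0∞) * (ENNReal.ofReal ((n : ℝ)⁻¹)) ^ d := by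
    rw [Finset.sum_congr rfl fun u _ => cube_volume hn u, Finset.sum_const,
      Set.ncard_eq_toFinset_card X hX]
    simp [nsmul_eq_mul]
  rw [← hcard, ← hsum]
  refine measure_mono ?_
  intro x hx
  simp only [Set.mem_iUnion] at hx
  obtain ⟨u, hu, hxu⟩ := hx
  exact hXY u (by simpa using hu) hxu

/-- counting lower bound: the number of lattice cubes covering a set. -/
lemma vol_le_count {n : ℕ} (hn : 0 < n) {K : Set (Fin d → ℝ)} (hK : Bornology.IsBounded K)
    {X : Set (Fin d → ℤ)} (hX : X.Finite) (hKX : ∀ x ∈ K, flr n x ∈ X) :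
    volume K ≤ (X.ncard : ℝ≥0∞) * (ENNReal.ofReal ((n : ℝ)⁻¹)) ^ d := by
  classical
  have hcover : K ⊆ ⋃ u ∈ hX.toFinset, cube n u := by
    intro x hx
    simp only [Set.mem_iUnion]
    exact ⟨flr n x, by simpa using hKX x hx, mem_cube_flr hn x⟩
  calc volume K ≤ volume (⋃ u ∈ hX.toFinset, cube n u) := measure_mono hcover
    _ ≤ ∑ u ∈ hX.toFinset, volume (cube n u) := measure_biUnion_finset_le _ _
    _ = (X.ncard : ℝ≥0∞) * (ENNReal.ofReal ((n : ℝ)⁻¹)) ^ d := by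
        rw [Finset.sum_congr rfl fun u _ => cube_volume hn u, Finset.sum_const,
          Set.ncard_eq_toFinset_card X hX]
        simp [nsmul_eq_mul]

end aux4

section aux5
variable {d : ℕ} {S : Set (Fin d → ℤ)} {a : Fin d → ℝ}

lemma null_frontier_biUnion {ι : Type*} (F : Finset ι) (A : ι → Set (Fin d → ℝ))
    (h : ∀ t ∈ F, volume (frontier (A t)) = 0) :
    volume (frontier (⋃ t ∈ F, A t)) = 0 := by
  classical
  induction F using Finset.induction with
  | empty => simp
  | @insert b F hb ih =>
    rw [Finset.set_biUnion_insert]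
    refine measure_mono_null (frontier_union_subset _ _) (measure_union_null ?_ ?_)
    · exact measure_mono_null Set.inter_subset_left (h b (Finset.mem_insert_self _ _))
    · exact measure_mono_null Set.inter_subset_right
        (ih fun t ht => h t (Finset.mem_insert_of_mem ht))

lemma rip_nonneg_cone (hS : IsStdSemigroup S a) {x : Fin d → ℝ} (hx : x ∈ coneOf S) :
    0 ≤ rip a x := by
  rcases eq_or_ne x 0 with rfl | h
  · simp [rip]
  · exact (hS.pointed x hx h).le

set_option maxHeartbeats 2000000 in
lemma main_count (hS : IsStdSemigroup S a) (T' : Set (Fin d → ℤ)) (hT'S : T' ⊆ S)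
    (hT'ideal : ∀ t ∈ T', ∀ s ∈ S, t + s ∈ T') (β : ℝ) {p : ℕ} (hp : 2 ≤ p) :
    Tendsto (fun e : ℕ =>
        ((({u : Fin d → ℤ | (∃ t ∈ T', ∃ s ∈ S, u = ((p^e : ℕ) : ℤ) • t + s) ∧
            aip a u < ((p^e : ℕ) : ℝ) * β}).ncard : ℝ) / (((p^e : ℕ) : ℝ))^d)) atTop
      (nhds ((volume {x : Fin d → ℝ |
        (∃ t ∈ T', x - zr t ∈ coneOf S) ∧ rip a x < β}).toReal)) := by
  classical
  set C : Set (Fin d → ℝ) := coneOf S with hCdef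
  set X : ℕ → Set (Fin d → ℤ) := fun n =>
    {u | (∃ t ∈ T', ∃ s ∈ S, u = (n : ℤ) • t + s) ∧ aip a u < (n : ℝ) * β} with hXdef
  set R : Set (Fin d → ℝ) := {x | (∃ t ∈ T', x - zr t ∈ C) ∧ rip a x < β} with hRdef
  obtain ⟨c, hc, hcb⟩ := cone_norm_bound hS
  -- membership facts
  have hXcone : ∀ n : ℕ, 0 < n → ∀ u ∈ X n, zr u ∈ C ∧ aip a u < n * β := by
    intro n hn u hu
    obtain ⟨⟨t, ht, s, hs, rfl⟩, hlt⟩ := hu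
    refine ⟨?_, hlt⟩
    rw [zr_add, zr_zsmul]
    exact coneOf_add (coneOf_smul (by positivity) (coneOf_zr (hT'S ht))) (coneOf_zr hs)
  have hXfin : ∀ n : ℕ, 0 < n → (X n).Finite := by
    intro n hn
    exact (finite_lattice_cone hS ((n : ℝ) * β)).subset fun u hu =>
      ⟨(hXcone n hn u hu).1, (hXcone n hn u hu).2⟩
  have hXR : ∀ n : ℕ, 0 < n → ∀ u ∈ X n, (n : ℝ)⁻¹ • zr u ∈ R := by
    intro n hn u hu
    have hn' : (0:ℝ) < n := by exact_mod_cast hn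
    obtain ⟨⟨t, ht, s, hs, rfl⟩, hlt⟩ := hu
    constructor
    · refine ⟨t, ht, ?_⟩
      rw [zr_add, zr_zsmul, smul_add, smul_smul]
      push_cast
      rw [inv_mul_cancel₀ hn'.ne', one_smul]
      simpa using coneOf_smul (by positivity : (0:ℝ) ≤ (n:ℝ)⁻¹) (coneOf_zr hs)
    · rw [rip_smul, rip_zr]
      rw [inv_mul_lt_iff₀ hn']
      convert hlt using 1
  -- R is bounded
  have hRsub : R ⊆ closedBall 0 (2 * |β| / c) := by
    intro x hx
    obtain ⟨⟨t, ht, hxt⟩, hrx⟩ := hx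
    have h1 : 0 ≤ rip a (x - zr t) := rip_nonneg_cone hS hxt
    have h2 : rip a (x - zr t) = rip a x - aip a t := by rw [rip_sub, rip_zr]
    have h3 : zr t ∈ C := coneOf_zr (hT'S ht)
    have h4 : 0 ≤ aip a t := by
      have := rip_nonneg_cone hS h3
      rwa [rip_zr] at this
    have h5 : ‖x - zr t‖ ≤ |β| / c := by
      have hb := hcb _ hxt
      rw [le_div_iff₀ hc]
      nlinarith [le_abs_self β]
    have h6 : ‖zr t‖ ≤ |β| / c := by
      have hb := hcb _ h3
      rw [rip_zr] at hb
      rw [le_div_iff₀ hc]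
      nlinarith [le_abs_self β]
    rw [mem_closedBall, dist_zero_right]
    calc ‖x‖ = ‖(x - zr t) + zr t‖ := by rw [sub_add_cancel]
      _ ≤ ‖x - zr t‖ + ‖zr t‖ := norm_add_le _ _
      _ ≤ 2 * |β| / c := by
          rw [show (2:ℝ) * |β| / c = |β| / c + |β| / c by ring]
          linarith
  have hRbounded : Bornology.IsBounded R :=
    (Metric.isBounded_closedBall).subset hRsub
  have hRfin : volume R ≠ ⊤ := hRbounded.measure_lt_top.ne
  have hcthfin : volume (cthickening 1 R) ≠ ⊤ :=
    (hRbounded.cthickening).measure_lt_top.ne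
  -- R as a finite union of convex sets
  set A : (Fin d → ℤ) → Set (Fin d → ℝ) :=
    fun t => {x | x - zr t ∈ C ∧ rip a x < β} with hAdef
  have hFfin : {t : Fin d → ℤ | t ∈ T' ∧ aip a t < β}.Finite :=
    (finite_lattice_cone hS β).subset fun t ht =>
      ⟨coneOf_zr (hT'S ht.1), ht.2⟩
  have haipt : ∀ {x : Fin d → ℝ} {t : Fin d → ℤ}, t ∈ T' → x - zr t ∈ C →
      aip a t ≤ rip a x := by
    intro x t ht hxt
    have h1 : 0 ≤ rip a (x - zr t) := rip_nonneg_cone hS hxt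
    rw [rip_sub, rip_zr] at h1
    linarith
  have hReq : R = ⋃ t ∈ hFfin.toFinset, A t := by
    ext x
    simp only [hRdef, Set.mem_setOf_eq, Set.mem_iUnion, Set.Finite.mem_toFinset, hAdef]
    constructor
    · rintro ⟨⟨t, ht, hxt⟩, hrx⟩
      exact ⟨t, ⟨ht, lt_of_le_of_lt (haipt ht hxt) hrx⟩, hxt, hrx⟩
    · rintro ⟨t, ⟨ht, _⟩, hxt, hrx⟩
      exact ⟨⟨t, ht, hxt⟩, hrx⟩
  have hAconvex : ∀ t, Convex ℝ (A t) := by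
    intro t
    intro x hx y hy s r hs hr hsr
    constructor
    · have heq : s • (x - zr t) + r • (y - zr t) = s • x + r • y - (s + r) • zr t := by
        module
      rw [show s • x + r • y - zr t = s • x + r • y - (1:ℝ) • zr t by rw [one_smul],
        ← hsr, ← heq]
      exact coneOf_convex hx.1 hy.1 hs hr hsr
    · rw [rip_add, rip_smul, rip_smul]
      rcases hs.eq_or_lt with hs0 | hs0
      · have hr1 : r = 1 := by linarith
        have h2 : r * rip a y < r * β := by rw [hr1, one_mul, one_mul]; exact hy.2
        have h1 : s * rip a x = 0 := by rw [← hs0, zero_mul]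
        have h3 : s * β = 0 := by rw [← hs0, zero_mul]
        have hβ : s * β + r * β = β := by rw [← add_mul, hsr, one_mul]
        linarith
      · have h1 : s * rip a x < s * β := (mul_lt_mul_iff_right₀ hs0).2 hx.2
        have h2 : r * rip a y ≤ r * β := mul_le_mul_of_nonneg_left hy.2.le hr
        have hβ : s * β + r * β = β := by rw [← add_mul, hsr, one_mul]
        linarith
  have hfrontR : volume (frontier R) = 0 := by
    rw [hReq]
    exact null_frontier_biUnion _ _ fun t _ => Convex.addHaar_frontier volume (hAconvex t)
  have hclosR : volume (closure R) = volume R := by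
    refine le_antisymm ?_ (measure_mono subset_closure)
    rw [closure_eq_self_union_frontier]
    calc volume (R ∪ frontier R) ≤ volume R + volume (frontier R) := measure_union_le _ _
      _ = volume R := by rw [hfrontR, add_zero]
  -- upper bound
  have hupper : ∀ n : ℕ, 0 < n →
      ((X n).ncard : ℝ) / (n : ℝ)^d ≤ (volume (cthickening ((n:ℝ)⁻¹) R)).toReal := by
    intro n hn
    have hn' : (0:ℝ) < n := by exact_mod_cast hn
    have hsub : ∀ u ∈ X n, cube n u ⊆ cthickening ((n:ℝ)⁻¹) R := by
      intro u hu x hx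
      refine closedBall_subset_cthickening (hXR n hn u hu) ((n:ℝ)⁻¹) ?_
      rw [mem_closedBall]
      exact cube_dist hn hx
    have hcount := count_le_vol hn (hXfin n hn) hsub
    have hfinv : volume (cthickening ((n:ℝ)⁻¹) R) ≠ ⊤ := by
      refine ne_top_of_le_ne_top hcthfin (measure_mono (cthickening_mono ?_ R))
      rw [inv_le_one_iff₀]
      right
      exact_mod_cast hn
    have := ENNReal.toReal_mono hfinv hcount
    rw [ENNReal.toReal_mul, ENNReal.toReal_pow, ENNReal.toReal_natCast,
      ENNReal.toReal_ofReal (by positivity)] at this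
    calc ((X n).ncard : ℝ) / (n : ℝ)^d = ((X n).ncard : ℝ) * ((n:ℝ)⁻¹)^d := by
          rw [div_eq_mul_inv, inv_pow]
      _ ≤ _ := this
  -- limit of the upper bound
  have hglim : Tendsto (fun e : ℕ => (volume (cthickening (((p^e : ℕ) : ℝ)⁻¹) R)).toReal)
      atTop (nhds ((volume R).toReal)) := by
    have h1 : Tendsto (fun e : ℕ => (((p^e : ℕ)) : ℝ)⁻¹) atTop (nhds 0) := by
      refine Filter.Tendsto.comp tendsto_inv_atTop_zero ?_
      have : Tendsto (fun e : ℕ => ((p:ℝ))^e) atTop atTop :=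
        tendsto_pow_atTop_atTop_of_one_lt (by exact_mod_cast hp)
      refine this.congr fun e => ?_
      push_cast
      ring
    have h2 : Tendsto (fun r : ℝ => volume (cthickening r R)) (nhds 0)
        (nhds (volume (closure R))) :=
      tendsto_measure_cthickening ⟨1, one_pos, hcthfin⟩
    have h3 := (h2.comp h1)
    rw [hclosR] at h3
    exact (ENNReal.tendsto_toReal hRfin).comp h3
  -- the open set U
  set U : Set (Fin d → ℝ) :=
    {x | (∃ t ∈ T', x - zr t ∈ interior C) ∧ rip a x < β} with hUdef
  have hUopen : IsOpen U := by
    have : U = ⋃ t ∈ T', (((fun x : Fin d → ℝ => x - zr t) ⁻¹' interior C)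
        ∩ {x | rip a x < β}) := by
      ext x
      simp only [hUdef, Set.mem_setOf_eq, Set.mem_iUnion, Set.mem_inter_iff, Set.mem_preimage]
      tauto
    rw [this]
    refine isOpen_biUnion fun t _ => IsOpen.inter ?_ ?_
    · exact (isOpen_interior).preimage (by fun_prop)
    · exact isOpen_lt rip_continuous continuous_const
  have hUsubR : U ⊆ R := fun x hx =>
    ⟨⟨hx.1.choose, hx.1.choose_spec.1, interior_subset hx.1.choose_spec.2⟩, hx.2⟩
  have hUfin : volume U ≠ ⊤ := ne_top_of_le_ne_top hRfin (measure_mono hUsubR)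
  have hRU : volume R ≤ volume U := by
    have hsub : R ⊆ U ∪ ⋃ t ∈ hFfin.toFinset, ((fun x : Fin d → ℝ => x - zr t) ⁻¹'
        (frontier C)) := by
      intro x hx
      obtain ⟨⟨t, ht, hxt⟩, hrx⟩ := hx
      by_cases hint : x - zr t ∈ interior C
      · exact Or.inl ⟨⟨t, ht, hint⟩, hrx⟩
      · refine Or.inr ?_
        simp only [Set.mem_iUnion, Set.Finite.mem_toFinset, Set.mem_preimage]
        refine ⟨t, ⟨ht, lt_of_le_of_lt (haipt ht hxt) hrx⟩, ?_⟩
        rw [IsClosed.frontier_eq coneOf_closed]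
        exact ⟨hxt, hint⟩
    calc volume R ≤ volume U + volume (⋃ t ∈ hFfin.toFinset,
          ((fun x : Fin d → ℝ => x - zr t) ⁻¹' (frontier C))) :=
            le_trans (measure_mono hsub) (measure_union_le _ _)
      _ = volume U := by
          have hnull : volume (⋃ t ∈ hFfin.toFinset,
              ((fun x : Fin d → ℝ => x - zr t) ⁻¹' (frontier C))) = 0 := by
            refine measure_biUnion_null_iff ?_ |>.2 fun t _ => ?_
            · exact (hFfin.toFinset : Finset (Fin d → ℤ)).countable_toSet
            · have : volume ((fun x : Fin d → ℝ => x - zr t) ⁻¹' (frontier C)) =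
                  volume (frontier C) := by
                have := measure_preimage_add_right (volume : Measure (Fin d → ℝ))
                  (-(zr t)) (frontier C)
                simpa [sub_eq_add_neg] using this
              rw [this]
              exact Convex.addHaar_frontier volume coneOf_convex
          rw [hnull, add_zero]
  -- lower bound construction
  have hlower : ∀ c' : ℝ, c' < (volume R).toReal →
      ∀ᶠ e : ℕ in atTop, c' < ((X (p^e)).ncard : ℝ) / ((p^e : ℕ) : ℝ)^d := by
    intro c' hc'
    rcases lt_or_ge c' 0 with hneg | hpos
    · refine Filter.Eventually.of_forall fun e => lt_of_lt_of_le hneg ?_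
      positivity
    -- find a compact inside U
    have hc'U : ENNReal.ofReal c' < volume U := by
      have h1 : c' < (volume U).toReal :=
        lt_of_lt_of_le hc' (ENNReal.toReal_mono hUfin hRU)
      exact (ENNReal.ofReal_lt_iff_lt_toReal hpos hUfin).2 h1
    obtain ⟨K, hKU, hKcomp, hKvol⟩ := hUopen.exists_lt_isCompact hc'U
    -- data for every point of K
    have hdata : ∀ x : Fin d → ℝ, x ∈ K → ∃ (t : Fin d → ℤ) (G : Finset (Fin d → ℤ))
        (x₀ : Fin d → ℤ) (δ : ℝ), t ∈ T' ∧ 0 < δ ∧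
        (∀ y : Fin d → ℝ, dist y x < 2 * δ → rip a y < β) ∧
        (∀ w : Fin d → ℤ, zr w ∈ coneFin G → w + x₀ ∈ S) ∧
        (∀ z : Fin d → ℝ, dist z (x - zr t) < 2 * δ → z ∈ coneFin G) := by
      intro x hx
      obtain ⟨⟨t, ht, hint⟩, hrx⟩ := hKU hx
      obtain ⟨G, δ', hGS, hδ', hGball⟩ := interior_subcone hS hint
      obtain ⟨x₀, hx₀⟩ := shift_lemma hS G hGS
      set Aa : ℝ := ∑ i, |a i| with hAa
      have hAa0 : 0 ≤ Aa := Finset.sum_nonneg fun i _ => abs_nonneg _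
      set ε : ℝ := β - rip a x with hε
      have hε0 : 0 < ε := by rw [hε]; linarith
      refine ⟨t, G, x₀, min δ' (ε / (2 * (Aa + 1))), ht, by positivity, ?_, hx₀, ?_⟩
      · intro y hy
        have h1 : |rip a y - rip a x| ≤ Aa * dist y x := rip_dist_le y x
        have h2 : dist y x < 2 * (ε / (2 * (Aa + 1))) :=
          lt_of_lt_of_le hy (by
            have := min_le_right δ' (ε / (2 * (Aa + 1)))
            linarith)
        have h3 : Aa * dist y x < ε := by
          have h4 : 2 * (ε / (2 * (Aa + 1))) = ε / (Aa + 1) := by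
            field_simp
            try ring
          rw [h4] at h2
          calc Aa * dist y x ≤ Aa * (ε / (Aa + 1)) := by
                refine mul_le_mul_of_nonneg_left ?_ hAa0
                rcases lt_or_ge (dist y x) 0 with h | h
                · linarith [dist_nonneg (x := y) (y := x)]
                · linarith
            _ < ε := by
                rw [mul_div_assoc']
                rw [div_lt_iff₀ (by positivity)]
                nlinarith
        have := abs_le.1 h1
        rw [hε] at h3
        cases abs_cases (rip a y - rip a x) with
        | inl h => nlinarith [h.1]
        | inr h => nlinarith [h.1]
      · intro z hz
        refine hGball ?_
        rw [mem_ball]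
        exact lt_of_lt_of_le hz (by
          have := min_le_left δ' (ε / (2 * (Aa + 1)))
          linarith)
    choose tK GK x₀K δK htK hδK hripK hshiftK hconeK using hdata
    -- finite subcover
    have hcover : K ⊆ ⋃ x : K, ball (x : Fin d → ℝ) (δK x x.2) := by
      intro x hx
      simp only [Set.mem_iUnion]
      exact ⟨⟨x, hx⟩, mem_ball_self (hδK x hx)⟩
    obtain ⟨F', hF'⟩ := hKcomp.elim_finite_subcover
      (fun m : K => ball (m : Fin d → ℝ) (δK m m.2)) (fun m => isOpen_ball) hcover
    -- eventually the scale is fine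
    have hevent : ∀ᶠ e : ℕ in atTop, ∀ m ∈ F',
        (((p^e : ℕ) : ℝ))⁻¹ * (1 + ‖zr (x₀K m m.2)‖) < δK m m.2 := by
      rw [eventually_all_finset]
      intro m hm
      have h1 : Tendsto (fun e : ℕ => (((p^e : ℕ)) : ℝ)⁻¹ * (1 + ‖zr (x₀K m m.2)‖)) atTop
          (nhds (0 * (1 + ‖zr (x₀K m m.2)‖))) := by
        refine Tendsto.mul_const _ ?_
        refine Filter.Tendsto.comp tendsto_inv_atTop_zero ?_
        have : Tendsto (fun e : ℕ => ((p:ℝ))^e) atTop atTop :=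
          tendsto_pow_atTop_atTop_of_one_lt (by exact_mod_cast hp)
        refine this.congr fun e => ?_
        push_cast
        ring
      rw [zero_mul] at h1
      exact h1.eventually_lt_const (hδK m m.2)
    filter_upwards [hevent] with e he
    set n : ℕ := p^e with hn
    have hn0 : 0 < n := by positivity
    have hn' : (0:ℝ) < n := by exact_mod_cast hn0
    -- every floor point of K is counted
    have hKX : ∀ x ∈ K, flr n x ∈ X n := by
      intro x hx
      obtain ⟨m, hmF, hmball⟩ := Set.mem_iUnion₂.1 (hF' hx)
      set u : Fin d → ℤ := flr n x with hu
      have hdistu : dist ((n : ℝ)⁻¹ • zr u) x ≤ (n : ℝ)⁻¹ := by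
        rw [dist_comm]
        exact cube_dist hn0 (mem_cube_flr hn0 x)
      have hnsmall : (n:ℝ)⁻¹ * (1 + ‖zr (x₀K m m.2)‖) < δK m m.2 := he m hmF
      have hninv : (n:ℝ)⁻¹ ≤ (n:ℝ)⁻¹ * (1 + ‖zr (x₀K m m.2)‖) := by
        nlinarith [norm_nonneg (zr (x₀K m m.2)), inv_pos.2 hn']
      have hdistm : dist ((n : ℝ)⁻¹ • zr u) (m : Fin d → ℝ) < 2 * δK m m.2 := by
        have h1 : dist x (m : Fin d → ℝ) < δK m m.2 := mem_ball.1 hmball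
        calc dist ((n : ℝ)⁻¹ • zr u) (m : Fin d → ℝ)
            ≤ dist ((n : ℝ)⁻¹ • zr u) x + dist x (m : Fin d → ℝ) := dist_triangle _ _ _
          _ < (n:ℝ)⁻¹ + δK m m.2 := by linarith
          _ ≤ 2 * δK m m.2 := by linarith [lt_of_le_of_lt hninv hnsmall]
      -- membership in the cone of the generator set
      have hw : zr (u - (n:ℤ) • tK m m.2 - x₀K m m.2) ∈ coneFin (GK m m.2) := by
        have hgoal : zr (u - (n:ℤ) • tK m m.2 - x₀K m m.2)
            = (n : ℝ) • ((n:ℝ)⁻¹ • zr u - zr (tK m m.2) - (n:ℝ)⁻¹ • zr (x₀K m m.2)) := by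
          rw [zr_sub, zr_sub, zr_zsmul]
          rw [smul_sub, smul_sub, smul_smul, smul_smul]
          rw [mul_inv_cancel₀ hn'.ne', one_smul, one_smul]
          push_cast
          ring_nf
        rw [hgoal]
        refine coneFin_smul (by positivity) ?_
        refine hconeK m m.2 _ ?_
        have h2 : dist ((n:ℝ)⁻¹ • zr u - (n:ℝ)⁻¹ • zr (x₀K m m.2))
            ((n : ℝ)⁻¹ • zr u) ≤ (n:ℝ)⁻¹ * ‖zr (x₀K m m.2)‖ := by
          rw [dist_eq_norm]
          rw [show ((n:ℝ)⁻¹ • zr u - (n:ℝ)⁻¹ • zr (x₀K m m.2)) - (n:ℝ)⁻¹ • zr u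
            = -((n:ℝ)⁻¹ • zr (x₀K m m.2)) by abel]
          rw [norm_neg, norm_smul, Real.norm_eq_abs, abs_of_pos (by positivity)]
        have h3 : dist ((n:ℝ)⁻¹ • zr u - zr (tK m m.2) - (n:ℝ)⁻¹ • zr (x₀K m m.2))
            ((m : Fin d → ℝ) - zr (tK m m.2)) < 2 * δK m m.2 := by
          have h4 : ((n:ℝ)⁻¹ • zr u - zr (tK m m.2) - (n:ℝ)⁻¹ • zr (x₀K m m.2))
              - ((m : Fin d → ℝ) - zr (tK m m.2))
              = ((n:ℝ)⁻¹ • zr u - (m : Fin d → ℝ)) - (n:ℝ)⁻¹ • zr (x₀K m m.2) := by abel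
          rw [dist_eq_norm, h4]
          calc ‖((n:ℝ)⁻¹ • zr u - (m : Fin d → ℝ)) - (n:ℝ)⁻¹ • zr (x₀K m m.2)‖
              ≤ ‖(n:ℝ)⁻¹ • zr u - (m : Fin d → ℝ)‖ + ‖(n:ℝ)⁻¹ • zr (x₀K m m.2)‖ :=
                norm_sub_le _ _
            _ < (δK m m.2 + (n:ℝ)⁻¹) + (n:ℝ)⁻¹ * ‖zr (x₀K m m.2)‖ := by
                have h5 : ‖(n:ℝ)⁻¹ • zr u - (m : Fin d → ℝ)‖ < δK m m.2 + (n:ℝ)⁻¹ := by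
                  rw [← dist_eq_norm]
                  calc dist ((n:ℝ)⁻¹ • zr u) (m : Fin d → ℝ)
                      ≤ dist ((n:ℝ)⁻¹ • zr u) x + dist x (m : Fin d → ℝ) :=
                        dist_triangle _ _ _
                    _ < (n:ℝ)⁻¹ + δK m m.2 := by
                        have := mem_ball.1 hmball
                        linarith
                    _ = δK m m.2 + (n:ℝ)⁻¹ := by ring
                have h6 : ‖(n:ℝ)⁻¹ • zr (x₀K m m.2)‖ = (n:ℝ)⁻¹ * ‖zr (x₀K m m.2)‖ := by
                  rw [norm_smul, Real.norm_eq_abs, abs_of_pos (by positivity)]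
                linarith [le_of_eq h6]
            _ ≤ 2 * δK m m.2 := by
                have h7 : (n:ℝ)⁻¹ + (n:ℝ)⁻¹ * ‖zr (x₀K m m.2)‖
                    = (n:ℝ)⁻¹ * (1 + ‖zr (x₀K m m.2)‖) := by ring
                linarith [hnsmall, h7.le]
        exact h3
      have hmemS : u - (n:ℤ) • tK m m.2 ∈ S := by
        have hsh := hshiftK m m.2 _ hw
        rwa [sub_add_cancel] at hsh
      constructor
      · exact ⟨tK m m.2, htK m m.2, u - (n:ℤ) • tK m m.2, hmemS, by abel⟩
      · have h8 : rip a ((n : ℝ)⁻¹ • zr u) < β := hripK m m.2 _ hdistm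
        rw [rip_smul, rip_zr] at h8
        have := (mul_lt_mul_of_pos_left h8 hn')
        rw [← mul_assoc, mul_inv_cancel₀ hn'.ne', one_mul] at this
        calc aip a u < (n:ℝ) * β := this
          _ = (n:ℝ) * β := rfl
    -- count vs volume of K
    have hKb : Bornology.IsBounded K := hKcomp.isBounded
    have hcount := vol_le_count hn0 hKb (hXfin n hn0) hKX
    have hKlt : ENNReal.ofReal c' < ((X n).ncard : ℝ≥0∞) * (ENNReal.ofReal ((n : ℝ)⁻¹)) ^ d :=
      lt_of_lt_of_le hKvol hcount
    have hfin2 : (((X n).ncard : ℝ≥0∞) * (ENNReal.ofReal ((n : ℝ)⁻¹)) ^ d) ≠ ⊤ := by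
      refine ENNReal.mul_ne_top (by simp) ?_
      exact ENNReal.pow_ne_top ENNReal.ofReal_ne_top
    have := ENNReal.toReal_lt_toReal ENNReal.ofReal_ne_top hfin2 |>.2 hKlt
    rw [ENNReal.toReal_ofReal hpos, ENNReal.toReal_mul, ENNReal.toReal_pow,
      ENNReal.toReal_natCast, ENNReal.toReal_ofReal (by positivity)] at this
    calc c' < ((X n).ncard : ℝ) * ((n:ℝ)⁻¹)^d := this
      _ = ((X n).ncard : ℝ) / ((n : ℕ) : ℝ)^d := by rw [div_eq_mul_inv, inv_pow]
  -- final squeeze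
  refine tendsto_order.2 ⟨?_, ?_⟩
  · intro c' hc'
    exact hlower c' hc'
  · intro c' hc'
    have h1 : ∀ᶠ e : ℕ in atTop,
        (volume (cthickening (((p^e : ℕ) : ℝ)⁻¹) R)).toReal < c' :=
      hglim.eventually_lt_const hc'
    filter_upwards [h1] with e he
    exact lt_of_le_of_lt (hupper (p^e) (by positivity)) he

end aux5


/-- A `p`-system of ideals in `S`, indexed by `e` (so `q = p^e`): each `T_q` is a semigroup
ideal of `S` contained in `S`, and `p·T_q ⊆ T_{pq}`. -/
structure IsPSystem {d : ℕ} (p : ℕ) (S : Set (Fin d → ℤ)) (T : ℕ → Set (Fin d → ℤ)) : Prop where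
  subset : ∀ e, T e ⊆ S
  ideal : ∀ e, ∀ t ∈ T e, ∀ s ∈ S, t + s ∈ T e
  frob : ∀ e, ∀ t ∈ T e, (p : ℤ) • t ∈ T (e + 1)

/-- The `p`-body `Δ(S, T_•) = ⋃_q ((1/q)T_q + Cone(S))`. -/
def pBody {d : ℕ} (p : ℕ) (S : Set (Fin d → ℤ)) (T : ℕ → Set (Fin d → ℤ)) :
    Set (Fin d → ℝ) :=
  ⋃ e : ℕ, {x | ∃ t ∈ T e, ∃ c ∈ coneOf S, x = ((p : ℝ) ^ e)⁻¹ • zr t + c}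

open Pointwise in
set_option maxHeartbeats 1000000 in
theorem stmt_1 {d : ℕ} (p : ℕ) (hp : p.Prime) (S : Set (Fin d → ℤ)) (a : Fin d → ℝ)
    (hS : IsStdSemigroup S a) (T : ℕ → Set (Fin d → ℤ)) (hT : IsPSystem p S T)
    (α : ℝ) (hα : 0 < α) :
    ∀ ε : ℝ, 0 < ε → ∃ e₀ : ℕ, ∀ e' : ℕ, e₀ ≤ e' →
      ∃ L : ℝ,
        Tendsto
          (fun e : ℕ =>
            (Set.ncard {u : Fin d → ℤ |
                (∃ t ∈ T e', ∃ s ∈ S, u = ((p : ℤ) ^ e) • t + s) ∧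
                  aip a u < (p : ℝ) ^ e * ((p : ℝ) ^ e' * α)} : ℝ) /
              ((p : ℝ) ^ (e * d) * (p : ℝ) ^ (e' * d)))
          atTop (nhds L) ∧
        (volume (pBody p S T ∩ {x : Fin d → ℝ | rip a x < α})).toReal - ε ≤ L := by
  classical
  intro ε hε
  have hp2 : 2 ≤ p := hp.two_le
  have hpR0 : (0:ℝ) < p := by positivity
  set H : Set (Fin d → ℝ) := {x | rip a x < α} with hH
  set Rr : ℕ → Set (Fin d → ℝ) := fun e' =>
    {x | (∃ t ∈ T e', x - zr t ∈ coneOf S) ∧ rip a x < (p:ℝ)^e' * α} with hRr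
  set B : ℕ → Set (Fin d → ℝ) := fun e' =>
    {x | ∃ t ∈ T e', ∃ c ∈ coneOf S, x = ((p : ℝ) ^ e')⁻¹ • zr t + c} ∩ H with hB
  have hq : ∀ e' : ℕ, (0:ℝ) < (p:ℝ)^e' := fun e' => by positivity
  -- scaling identity
  have hBsmul : ∀ e' : ℕ, B e' = ((p:ℝ)^e')⁻¹ • Rr e' := by
    intro e'
    ext x
    rw [Set.mem_smul_set]
    constructor
    · rintro ⟨⟨t, ht, cc, hcc, rfl⟩, hx⟩
      refine ⟨(p:ℝ)^e' • (((p:ℝ)^e')⁻¹ • zr t + cc), ⟨⟨t, ht, ?_⟩, ?_⟩, ?_⟩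
      · rw [smul_add, smul_smul, mul_inv_cancel₀ (hq e').ne', one_smul, add_sub_cancel_left]
        exact coneOf_smul (hq e').le hcc
      · rw [rip_smul]
        have hx' : rip a (((p:ℝ)^e')⁻¹ • zr t + cc) < α := hx
        exact (mul_lt_mul_iff_right₀ (hq e')).2 hx'
      · rw [smul_smul, inv_mul_cancel₀ (hq e').ne', one_smul]
    · rintro ⟨y, ⟨⟨t, ht, hyt⟩, hy⟩, rfl⟩
      constructor
      · refine ⟨t, ht, ((p:ℝ)^e')⁻¹ • (y - zr t),
          coneOf_smul (inv_pos.2 (hq e')).le hyt, ?_⟩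
        rw [smul_sub]
        abel
      · show rip a (((p:ℝ)^e')⁻¹ • y) < α
        rw [rip_smul, inv_mul_lt_iff₀ (hq e')]
        exact hy
  have hfr : Module.finrank ℝ (Fin d → ℝ) = d := by simp
  have hvolB : ∀ e' : ℕ, (volume (B e')).toReal
      = (volume (Rr e')).toReal / ((p:ℝ)^e')^d := by
    intro e'
    rw [hBsmul e', Measure.addHaar_smul, ENNReal.toReal_mul,
      ENNReal.toReal_ofReal (abs_nonneg _), hfr]
    have h1 : |(((p:ℝ)^e')⁻¹) ^ d| = (((p:ℝ)^e')^d)⁻¹ := by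
      rw [abs_of_pos (by positivity), inv_pow]
    rw [h1, inv_mul_eq_div]
  -- monotonicity of B
  have hBmono : Monotone B := by
    refine monotone_nat_of_le_succ fun e' => ?_
    rintro x ⟨⟨t, ht, cc, hcc, hx⟩, hxH⟩
    refine ⟨⟨(p:ℤ) • t, hT.frob e' t ht, cc, hcc, ?_⟩, hxH⟩
    rw [hx]
    congr 1
    rw [zr_zsmul, smul_smul]
    congr 1
    push_cast
    rw [pow_succ]
    field_simp
  have hUnion : pBody p S T ∩ H = ⋃ e', B e' := by
    rw [pBody, Set.iUnion_inter]
  have hVsup : volume (pBody p S T ∩ H) = ⨆ e', volume (B e') := by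
    rw [hUnion]
    exact hBmono.measure_iUnion
  -- boundedness and finiteness
  obtain ⟨c₀, hc₀, hcb⟩ := cone_norm_bound hS
  have hPBsub : pBody p S T ∩ H ⊆ closedBall 0 (|α| / c₀) := by
    rintro x ⟨hx1, hx2⟩
    obtain ⟨e'', hx1⟩ := Set.mem_iUnion.1 hx1
    obtain ⟨t, ht, cc, hcc, rfl⟩ := hx1
    have hxC : ((p:ℝ)^e'')⁻¹ • zr t + cc ∈ coneOf S :=
      coneOf_add (coneOf_smul (by positivity) (coneOf_zr (hT.subset _ ht))) hcc
    have h1 := hcb _ hxC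
    have h2 : rip a (((p:ℝ)^e'')⁻¹ • zr t + cc) < α := hx2
    rw [mem_closedBall, dist_zero_right, le_div_iff₀ hc₀]
    nlinarith [le_abs_self α]
  have hVfin : volume (pBody p S T ∩ H) ≠ ⊤ :=
    ((Metric.isBounded_closedBall).subset hPBsub).measure_lt_top.ne
  have hBfin : ∀ e', volume (B e') ≠ ⊤ := by
    intro e'
    refine ne_top_of_le_ne_top hVfin (measure_mono ?_)
    rw [hUnion]
    exact Set.subset_iUnion B e'
  set V : ℝ := (volume (pBody p S T ∩ H)).toReal with hV
  -- choice of e₀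
  have hex : ∃ e₀ : ℕ, V - ε < (volume (B e₀)).toReal := by
    rcases lt_or_ge (V - ε) 0 with h | h
    · exact ⟨0, lt_of_lt_of_le h ENNReal.toReal_nonneg⟩
    by_contra hcon
    push_neg at hcon
    have h1 : ∀ e', volume (B e') ≤ ENNReal.ofReal (V - ε) := fun e' =>
      (ENNReal.le_ofReal_iff_toReal_le (hBfin e') h).2 (hcon e')
    have h2 : volume (pBody p S T ∩ H) ≤ ENNReal.ofReal (V - ε) := by
      rw [hVsup]
      exact iSup_le h1
    have h3 : V ≤ V - ε := by
      have h4 := ENNReal.toReal_mono ENNReal.ofReal_ne_top h2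
      rwa [ENNReal.toReal_ofReal h] at h4
    linarith
  obtain ⟨e₀, he₀⟩ := hex
  refine ⟨e₀, fun e' he' => ?_⟩
  have hmono' : (volume (B e₀)).toReal ≤ (volume (B e')).toReal :=
    ENNReal.toReal_mono (hBfin e') (measure_mono (hBmono he'))
  refine ⟨(volume (B e')).toReal, ?_, by linarith⟩
  -- the main limit
  have hmain := main_count hS (T e') (hT.subset e') (hT.ideal e') ((p:ℝ)^e' * α) hp2
  have hdiv := hmain.div_const (((p:ℝ)^e')^d)
  have hlim : (volume (Rr e')).toReal / ((p:ℝ)^e')^d = (volume (B e')).toReal :=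
    (hvolB e').symm
  rw [hlim] at hdiv
  refine hdiv.congr fun e => ?_
  have hc1 : ((p^e : ℕ) : ℤ) = (p:ℤ)^e := by push_cast; ring
  have hc2 : ((p^e : ℕ) : ℝ) = (p:ℝ)^e := by push_cast; ring
  have hset : {u : Fin d → ℤ | (∃ t ∈ T e', ∃ s ∈ S, u = ((p^e : ℕ) : ℤ) • t + s) ∧
      aip a u < ((p^e : ℕ) : ℝ) * ((p:ℝ)^e' * α)}
      = {u : Fin d → ℤ | (∃ t ∈ T e', ∃ s ∈ S, u = ((p : ℤ) ^ e) • t + s) ∧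
      aip a u < (p : ℝ) ^ e * ((p : ℝ) ^ e' * α)} := by
    simp only [hc1, hc2]
  rw [hset, div_div, hc2, ← pow_mul, ← pow_mul]

end
end

section
/- Let (R, m) be a Noetherian local ring of prime characteristic p and let I_• = {I_q} be a p-family of m-primary ideals of R, indexed by powers q = p^e of p. Then there exists an integer c > 0 such that m^{cq} ⊆ I_q for all q, and moreover m^{c p^e q} ⊆ I_q^{[p^e]} for all q and all e ≥ 0. -/
/-!
Statement 6 (Lemma 4.4): for a Noetherian local ring `(R,m)` of prime characteristic `p` and a
`p`-family `I_•` of `m`-primary ideals, there is `c > 0` with `m^{cq} ⊆ I_q` for all `q = p^e`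
and `m^{c p^{e'} q} ⊆ I_q^{[p^{e'}]}` for all `q` and `e' ≥ 0`.
-/

open Filter IsLocalRing

noncomputable section

/-- The length `ℓ_R(M)` of an `R`-module `M`, defined as the Krull dimension of its lattice
of submodules (i.e. the supremum of lengths of chains of submodules), valued in `ℕ∞`. -/
def mlen (R M : Type*) [Semiring R] [AddCommGroup M] [Module R M] : ℕ∞ :=
  WithBot.unbotD 0 (Order.krullDim (Submodule R M))

/-- The `q`-th Frobenius power `I^{[q]}` of an ideal `I`: the ideal generated by the
`q`-th powers of the elements of `I`. -/
def frobPow {R : Type*} [CommSemiring R] (I : Ideal R) (q : ℕ) : Ideal R :=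
  Ideal.span ((fun x : R => x ^ q) '' (I : Set R))

section aux
variable {R : Type*} [CommRing R]

lemma frobPow_mono {I J : Ideal R} (h : I ≤ J) (Q : ℕ) : frobPow I Q ≤ frobPow J Q :=
  Ideal.span_mono (Set.image_mono h)

lemma frobPow_one (I : Ideal R) : frobPow I 1 = I := by
  simp [frobPow, Ideal.span_eq]

lemma frobPow_mul_le (I : Ideal R) (a b : ℕ) :
    frobPow I (a * b) ≤ frobPow (frobPow I a) b := by
  rw [frobPow, Ideal.span_le]
  rintro - ⟨x, hx, rfl⟩
  simp only [SetLike.mem_coe]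
  have hxa : x ^ a ∈ frobPow I a := Ideal.subset_span ⟨x, hx, rfl⟩
  have : x ^ (a * b) = (x ^ a) ^ b := by rw [pow_mul]
  rw [this]
  exact Ideal.subset_span ⟨x ^ a, hxa, rfl⟩

lemma frobPow_mul_frobPow_le (I J : Ideal R) (Q : ℕ) :
    frobPow I Q * frobPow J Q ≤ frobPow (I * J) Q := by
  rw [frobPow, frobPow, Ideal.span_mul_span', Ideal.span_le]
  rintro - ⟨-, ⟨x, hx, rfl⟩, -, ⟨y, hy, rfl⟩, rfl⟩
  simp only [SetLike.mem_coe]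
  rw [← mul_pow]
  exact Ideal.subset_span ⟨x * y, Ideal.mul_mem_mul hx hy, rfl⟩

lemma frobPow_pow_le (I : Ideal R) (Q n : ℕ) :
    (frobPow I Q) ^ n ≤ frobPow (I ^ n) Q := by
  induction n with
  | zero =>
      rw [pow_zero, pow_zero]
      intro x _
      have h1 : (1 : R) ∈ frobPow (⊤ : Ideal R) Q := by
        have : (1 : R) = (1 : R) ^ Q := (one_pow Q).symm
        rw [this]
        exact Ideal.subset_span ⟨1, trivial, rfl⟩
      simpa using (frobPow (⊤ : Ideal R) Q).smul_mem x h1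
  | succ n ih =>
      calc (frobPow I Q) ^ (n + 1) = (frobPow I Q) ^ n * frobPow I Q := pow_succ _ _
        _ ≤ frobPow (I ^ n) Q * frobPow I Q := Ideal.mul_mono_left ih
        _ ≤ frobPow (I ^ n * I) Q := frobPow_mul_frobPow_le _ _ _
        _ = frobPow (I ^ (n + 1)) Q := by rw [← pow_succ]

/-- Pigeonhole: a power of a finitely generated ideal lands in the span of `Q`-th powers
of the generators. -/
lemma span_pow_le_span_pow_image (S : Finset R) (Q : ℕ) :
    Ideal.span (S : Set R) ^ (S.card * Q + 1) ≤
      Ideal.span ((fun x : R => x ^ Q) '' (S : Set R)) := by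
  classical
  induction S using Finset.induction with
  | empty => simp
  | @insert x S hx ih =>
      rw [Finset.coe_insert, Ideal.span_insert, Finset.card_insert_of_notMem hx]
      have harith : (S.card + 1) * Q + 1 = Q + (S.card * Q + 1) := by ring
      rw [harith]
      refine le_trans Ideal.sup_pow_add_le_pow_sup_pow (sup_le ?_ ?_)
      · rw [Ideal.span_singleton_pow]
        rw [Ideal.span_le]
        intro y hy
        simp only [Set.mem_singleton_iff] at hy
        subst hy
        exact Ideal.subset_span ⟨x, Set.mem_insert x _, rfl⟩
      · refine le_trans ih (Ideal.span_mono (Set.image_mono ?_))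
        exact Set.subset_insert x S

lemma span_subset_frobPow (I : Ideal R) (Q : ℕ) (s : Set R) (hs : s ⊆ I) :
    Ideal.span ((fun x : R => x ^ Q) '' s) ≤ frobPow I Q :=
  Ideal.span_mono (Set.image_mono hs)

end aux

theorem stmt_6 (R : Type*) [CommRing R] [IsNoetherianRing R] [IsLocalRing R]
    (p : ℕ) (hp : p.Prime) [CharP R p] (I : ℕ → Ideal R)
    (hprim : ∀ e : ℕ, (I e).radical = maximalIdeal R)
    (hfam : ∀ e : ℕ, frobPow (I e) p ≤ I (e + 1)) :
    ∃ c : ℕ, 0 < c ∧ (∀ e : ℕ, maximalIdeal R ^ (c * p ^ e) ≤ I e) ∧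
      ∀ e e' : ℕ, maximalIdeal R ^ (c * p ^ e' * p ^ e) ≤ frobPow (I e) (p ^ e') := by
  set m : Ideal R := maximalIdeal R with hm
  -- m is finitely generated
  obtain ⟨S, hS⟩ : m.FG := IsNoetherian.noetherian m
  -- some power of m is contained in I 0
  obtain ⟨k₀, hk₀⟩ : ∃ n, m ^ n ≤ I 0 := by
    obtain ⟨n, hn⟩ := Ideal.exists_radical_pow_le_of_fg (I 0) (by rw [hprim 0]; exact ⟨S, hS⟩)
    exact ⟨n, by rwa [hprim 0] at hn⟩
  set μ : ℕ := S.card + 1 with hμ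
  set k : ℕ := k₀ + 1 with hk
  have hkI : m ^ k ≤ I 0 := le_trans (Ideal.pow_le_pow_right (Nat.le_succ _)) hk₀
  -- pigeonhole: m^(μ*Q) ≤ frobPow m Q for Q ≥ 1
  have pigeon : ∀ Q : ℕ, 1 ≤ Q → m ^ (μ * Q) ≤ frobPow m Q := by
    intro Q hQ
    have h1 : μ * Q = S.card * Q + Q := by rw [hμ]; ring
    have h2 : S.card * Q + 1 ≤ μ * Q := by omega
    calc m ^ (μ * Q) ≤ m ^ (S.card * Q + 1) := Ideal.pow_le_pow_right h2
      _ = Ideal.span (S : Set R) ^ (S.card * Q + 1) := by rw [hS]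
      _ ≤ Ideal.span ((fun x : R => x ^ Q) '' (S : Set R)) := span_pow_le_span_pow_image S Q
      _ ≤ frobPow m Q := span_subset_frobPow m Q _ (by rw [← hS]; exact Ideal.subset_span)
  -- iterate the p-family property
  have iter : ∀ e e' : ℕ, frobPow (I e) (p ^ e') ≤ I (e + e') := by
    intro e e'
    induction e' with
    | zero => rw [pow_zero, frobPow_one]; simp
    | succ n ih =>
        calc frobPow (I e) (p ^ (n + 1)) = frobPow (I e) (p ^ n * p) := by rw [pow_succ]
          _ ≤ frobPow (frobPow (I e) (p ^ n)) p := frobPow_mul_le _ _ _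
          _ ≤ frobPow (I (e + n)) p := frobPow_mono ih p
          _ ≤ I (e + n + 1) := hfam _
  have hp1 : ∀ e : ℕ, 1 ≤ p ^ e := fun e => Nat.one_le_pow e p hp.pos
  -- key intermediate: m^(k*μ*p^e) ≤ I e
  have key : ∀ e : ℕ, m ^ (k * μ * p ^ e) ≤ I e := by
    intro e
    have h1 : k * μ * p ^ e = μ * p ^ e * k := by ring
    calc m ^ (k * μ * p ^ e) = (m ^ (μ * p ^ e)) ^ k := by rw [h1, pow_mul]
      _ ≤ (frobPow m (p ^ e)) ^ k := Ideal.pow_right_mono (pigeon _ (hp1 e)) k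
      _ ≤ frobPow (m ^ k) (p ^ e) := frobPow_pow_le _ _ _
      _ ≤ frobPow (I 0) (p ^ e) := frobPow_mono hkI _
      _ ≤ I e := by simpa using iter 0 e
  refine ⟨k * μ * μ, by positivity, ?_, ?_⟩
  · intro e
    refine le_trans (Ideal.pow_le_pow_right ?_) (key e)
    exact Nat.mul_le_mul_right _ (Nat.le_mul_of_pos_right _ (by omega))
  · intro e e'
    have h1 : k * μ * μ * p ^ e' * p ^ e = μ * p ^ e' * (k * μ * p ^ e) := by ring
    calc m ^ (k * μ * μ * p ^ e' * p ^ e)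
        = (m ^ (μ * p ^ e')) ^ (k * μ * p ^ e) := by rw [h1, pow_mul]
      _ ≤ (frobPow m (p ^ e')) ^ (k * μ * p ^ e) :=
          Ideal.pow_right_mono (pigeon _ (hp1 e')) _
      _ ≤ frobPow (m ^ (k * μ * p ^ e)) (p ^ e') := frobPow_pow_le _ _ _
      _ ≤ frobPow (I e) (p ^ e') := frobPow_mono (key e) _


end
end

section
/- Let (R, m) be a Noetherian local ring of prime characteristic p, let I be an m-primary ideal, and let M be a finitely generated R-module. Then there exists a constant α > 0 such that ℓ_R(M/I^{[p^e]}M) ≤ α · p^{e·dim M} for all e ≥ 0, where dim M denotes the Krull dimension of R/ann(M). -/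
/-!
Statement 7 (Lemma 4.11): for a Noetherian local ring `(R,m)` of prime characteristic `p`, an
`m`-primary ideal `I`, and a finitely generated `R`-module `M`, there is a constant `α > 0`
with `ℓ_R(M/I^{[p^e]}M) ≤ α · p^{e·dim M}` for all `e ≥ 0`, where
`dim M = Krull dim of R/ann(M)`.
-/

open Filter IsLocalRing

noncomputable section

section LenB
variable {R : Type*} [Ring R]

/-- `lenB R M n` : every strict chain of submodules of `M` has length at most `n`. -/
def lenB (R M : Type*) [Ring R] [AddCommGroup M] [Module R M] (n : ℕ) : Prop :=
  ∀ q : LTSeries (Submodule R M), q.length ≤ n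

variable {M N : Type*} [AddCommGroup M] [Module R M] [AddCommGroup N] [Module R N]

lemma lenB_mono {m n : ℕ} (h : m ≤ n) (hm : lenB R M m) : lenB R M n :=
  fun q => (hm q).trans h

lemma lenB_of_subsingleton [Subsingleton M] (n : ℕ) : lenB R M n := by
  intro q
  have : Subsingleton (Submodule R M) := (Submodule.subsingleton_iff R).2 inferInstance
  by_contra h
  have h1 : 0 < q.length := Nat.pos_of_ne_zero (fun h0 => h (h0 ▸ Nat.zero_le n))
  have := q.strictMono (show (⟨0, by omega⟩ : Fin (q.length + 1)) < ⟨1, by omega⟩ by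
    simp [Fin.lt_def])
  exact this.ne (Subsingleton.elim _ _)

lemma lenB_of_surjective (f : M →ₗ[R] N) (hf : Function.Surjective f) {n : ℕ}
    (h : lenB R M n) : lenB R N n := by
  intro q
  have hinj : Function.Injective (Submodule.comap f) :=
    Submodule.comap_injective_of_surjective hf
  have hsm : StrictMono (Submodule.comap f : Submodule R N → Submodule R M) :=
    fun a b hab => lt_of_le_of_ne (Submodule.comap_mono hab.le) (fun he => hab.ne (hinj he))
  exact (h (q.map _ hsm) : q.length ≤ n)

lemma lenB_of_equiv (e : M ≃ₗ[R] N) {n : ℕ} (h : lenB R M n) : lenB R N n :=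
  lenB_of_surjective e.toLinearMap e.surjective h

/-- Subadditivity of chain-length bounds in a short exact sequence. -/
lemma lenB_ext (P : Submodule R M) {a b : ℕ}
    (hN : lenB R P a) (hQ : lenB R (M ⧸ P) b) : lenB R M (a + b) := by
  intro q
  set f : Submodule R M → Submodule R P := fun X => Submodule.comap P.subtype X with hf
  set g : Submodule R M → Submodule R (M ⧸ P) := fun X => Submodule.map P.mkQ X with hg
  have hfa : ∀ X : Submodule R P, Order.height X ≤ (a : ℕ∞) :=
    fun X => Order.height_le (fun p _ => by exact_mod_cast hN p)
  have hgb : ∀ X : Submodule R (M ⧸ P), Order.height X ≤ (b : ℕ∞) :=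
    fun X => Order.height_le (fun p _ => by exact_mod_cast hQ p)
  -- at each step of the chain, f or g strictly increases
  have step : ∀ {X Y : Submodule R M}, X < Y → f X < f Y ∨ g X < g Y := by
    intro X Y hXY
    by_cases hgXY : g X < g Y
    · exact Or.inr hgXY
    · left
      have hgle : g Y ≤ g X := by
        rcases (Submodule.map_mono hXY.le : g X ≤ g Y).lt_or_eq with h | h
        · exact absurd h hgXY
        · exact h.ge
      have hsup : Y ⊔ P ≤ X ⊔ P := by
        have := Submodule.comap_mono (f := P.mkQ) hgle
        rwa [hg, Submodule.comap_map_mkQ, Submodule.comap_map_mkQ, sup_comm P X, sup_comm P Y]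
          at this
      have hinf : X ⊓ P < Y ⊓ P := inf_lt_inf_of_lt_of_sup_le_sup hXY hsup
      have hle : f X ≤ f Y := Submodule.comap_mono hXY.le
      refine lt_of_le_of_ne hle (fun he => hinf.ne ?_)
      have := congrArg (Submodule.map P.subtype) he
      rwa [hf, Submodule.map_comap_subtype, Submodule.map_comap_subtype, inf_comm P X,
        inf_comm P Y] at this
  -- induction: i ≤ height (f (q i)) + height (g (q i))
  have key : ∀ i : Fin (q.length + 1),
      (i : ℕ∞) ≤ Order.height (f (q i)) + Order.height (g (q i)) := by
    intro i
    induction i using Fin.induction with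
    | zero => simp
    | succ i ih =>
      have hlt : q i.castSucc < q i.succ := q.strictMono Fin.castSucc_lt_succ
      have hcast : ((i.succ : Fin (q.length + 1)) : ℕ∞) = (i.castSucc : ℕ∞) + 1 := by
        push_cast
        simp [Fin.val_succ, Fin.coe_castSucc]
      rw [hcast]
      rcases step hlt with h | h
      · have h1 : Order.height (f (q i.castSucc)) + 1 ≤ Order.height (f (q i.succ)) := by
          rw [ENat.add_one_le_iff (by exact ((hfa _).trans_lt (by simp)).ne)]
          exact Order.height_strictMono h ((hfa _).trans_lt (by simp))
        calc (i.castSucc : ℕ∞) + 1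
            ≤ (Order.height (f (q i.castSucc)) + Order.height (g (q i.castSucc))) + 1 := by
              exact add_le_add ih (le_refl 1)
          _ = (Order.height (f (q i.castSucc)) + 1) + Order.height (g (q i.castSucc)) := by
              ring
          _ ≤ Order.height (f (q i.succ)) + Order.height (g (q i.succ)) :=
              add_le_add h1 (Order.height_mono (Submodule.map_mono hlt.le))
      · have h1 : Order.height (g (q i.castSucc)) + 1 ≤ Order.height (g (q i.succ)) := by
          rw [ENat.add_one_le_iff (by exact ((hgb _).trans_lt (by simp)).ne)]
          exact Order.height_strictMono h ((hgb _).trans_lt (by simp))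
        calc (i.castSucc : ℕ∞) + 1
            ≤ (Order.height (f (q i.castSucc)) + Order.height (g (q i.castSucc))) + 1 := by
              exact add_le_add ih (le_refl 1)
          _ = Order.height (f (q i.castSucc)) + (Order.height (g (q i.castSucc)) + 1) := by
              ring
          _ ≤ Order.height (f (q i.succ)) + Order.height (g (q i.succ)) :=
              add_le_add (Order.height_mono (Submodule.comap_mono hlt.le)) h1
  have : (q.length : ℕ∞) ≤ (a : ℕ∞) + (b : ℕ∞) := by
    have h := key (Fin.last q.length)
    have := h.trans (add_le_add (hfa _) (hgb _))
    simpa using this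
  exact_mod_cast this

end LenB

section Part2
variable {R : Type*} [CommRing R] {M : Type*} [AddCommGroup M] [Module R M]

/-- extract a finite value of `mlen` from a chain bound -/
lemma mlen_eq_of_lenB {n : ℕ} (h : lenB R M n) : ∃ m : ℕ, mlen R M = m ∧ m ≤ n := by
  have hne : Nonempty (Submodule R M) := ⟨⊥⟩
  have hub : Order.krullDim (Submodule R M) ≤ ((n : ℕ∞) : WithBot ℕ∞) := by
    rw [Order.krullDim]
    exact iSup_le (fun p => by exact_mod_cast h p)
  have hlb : 0 ≤ Order.krullDim (Submodule R M) := Order.krullDim_nonneg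
  rw [mlen]
  match hD : Order.krullDim (Submodule R M) with
  | ⊥ => rw [hD] at hlb; simp [WithBot.none_eq_bot] at hlb
  | (d : ℕ∞) =>
    rw [hD] at hub
    have hd : d ≤ (n : ℕ∞) := by rwa [WithBot.some_eq_coe, WithBot.coe_le_coe] at hub
    have hdt : d ≠ ⊤ := (hd.trans_lt (by simp)).ne
    refine ⟨d.toNat, ?_, ?_⟩
    · simp [ENat.coe_toNat hdt]
    · exact_mod_cast (ENat.coe_toNat hdt).le.trans hd

/-- `M ⧸ (I ⊔ K) • ⊤` is the same as `(M ⧸ I•⊤) ⧸ K•⊤`. -/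
def quotSupEquiv (I K : Ideal R) :
    ((M ⧸ I • (⊤ : Submodule R M)) ⧸
      K • (⊤ : Submodule R (M ⧸ I • (⊤ : Submodule R M)))) ≃ₗ[R]
    M ⧸ (I ⊔ K) • (⊤ : Submodule R M) := by
  have h1 : K • (⊤ : Submodule R (M ⧸ I • (⊤ : Submodule R M)))
      = Submodule.map (I • (⊤ : Submodule R M)).mkQ (K • (⊤ : Submodule R M)) := by
    rw [Submodule.map_smul'', Submodule.map_top, Submodule.range_mkQ]
  rw [h1, Submodule.sup_smul]
  exact Submodule.quotientQuotientEquivQuotientSup _ _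

lemma lenB_quot_mono {I K : Ideal R} (hIK : I ≤ K) {n : ℕ}
    (h : lenB R (M ⧸ I • (⊤ : Submodule R M)) n) :
    lenB R (M ⧸ K • (⊤ : Submodule R M)) n := by
  refine lenB_of_surjective
    (Submodule.mapQ _ _ LinearMap.id ?_) ?_ h
  · intro x hx
    simp only [Submodule.mem_comap, LinearMap.id_coe, id_eq]
    exact Submodule.smul_mono hIK le_rfl hx
  · intro z
    obtain ⟨m, rfl⟩ := Submodule.mkQ_surjective _ z
    exact ⟨Submodule.Quotient.mk m, rfl⟩

/-- One-variable bound: `ℓ(M/x^n M) ≤ n · ℓ(M/xM)`. -/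
lemma lenB_pow_single (x : R) {c : ℕ}
    (h : lenB R (M ⧸ (Ideal.span {x}) • (⊤ : Submodule R M)) c) :
    ∀ n : ℕ, lenB R (M ⧸ (Ideal.span {x ^ n}) • (⊤ : Submodule R M)) (n * c) := by
  intro n
  induction n with
  | zero =>
    have : (Ideal.span {x ^ 0} : Ideal R) = ⊤ := by
      simp [Ideal.span_singleton_eq_top]
    rw [this, Submodule.top_smul]
    have : Subsingleton (M ⧸ (⊤ : Submodule R M)) :=
      Submodule.Quotient.subsingleton_iff.2 rfl
    exact lenB_of_subsingleton _
  | succ n ih =>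
    set A : Submodule R M := (Ideal.span {x ^ (n+1)}) • ⊤ with hA
    set B : Submodule R M := (Ideal.span {x ^ n}) • ⊤ with hB
    have hAB : A ≤ B := by
      refine Submodule.smul_mono ?_ le_rfl
      rw [Ideal.span_singleton_le_span_singleton]
      exact ⟨x, by ring⟩
    set S : Submodule R (M ⧸ A) := Submodule.map A.mkQ B with hS
    -- lenB S c via surjection from M / xM
    have hSc : lenB R S c := by
      have hmem : ∀ y : M, A.mkQ ((x ^ n) • y) ∈ S := by
        intro y
        exact ⟨(x ^ n) • y,
          Submodule.smul_mem_smul (Ideal.mem_span_singleton_self _) trivial, rfl⟩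
      set φ : M →ₗ[R] S :=
        LinearMap.codRestrict S ((A.mkQ).comp ((x ^ n) • (LinearMap.id : M →ₗ[R] M)))
          (fun y => hmem y) with hφ
      have hker : (Ideal.span {x}) • (⊤ : Submodule R M) ≤ LinearMap.ker φ := by
        intro y hy
        have hxny : (x ^ n) • y ∈ A := by
          refine Submodule.smul_induction_on hy ?_ ?_
          · intro r hr z _
            obtain ⟨a, ha⟩ := Ideal.mem_span_singleton'.1 hr
            have : (x ^ n) • (r • z) = (a * x ^ (n+1)) • z := by
              rw [← ha, ← smul_assoc, smul_eq_mul]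
              ring_nf
            rw [this]
            exact Submodule.smul_mem_smul (Ideal.mem_span_singleton'.2 ⟨a, rfl⟩) trivial
          · intro z w hz hw
            rw [smul_add]
            exact A.add_mem hz hw
        have : φ y = 0 := by
          apply Subtype.ext
          simpa [φ, ← Submodule.Quotient.mk_smul, Submodule.Quotient.mk_eq_zero] using hxny
        simpa [LinearMap.mem_ker] using this
      set ψ := Submodule.liftQ _ φ hker with hψ
      have hsurj : Function.Surjective ψ := by
        have claim : ∀ b ∈ B, A.mkQ b ∈ LinearMap.range (S.subtype.comp ψ) := by
          intro b hb
          refine Submodule.smul_induction_on hb ?_ ?_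
          · intro r hr z _
            obtain ⟨a, ha⟩ := Ideal.mem_span_singleton'.1 hr
            refine ⟨Submodule.Quotient.mk (a • z), ?_⟩
            simp only [ψ, φ, LinearMap.coe_comp, Submodule.coe_subtype, Function.comp_apply,
              Submodule.liftQ_apply, LinearMap.codRestrict_apply, LinearMap.smul_apply,
              LinearMap.id_apply, ← Submodule.Quotient.mk_smul, Submodule.mkQ_apply]
            congr 1
            rw [smul_smul, mul_comm, ha]
          · intro z w hz hw
            rw [map_add]
            exact add_mem hz hw
        rintro ⟨s, hs⟩
        obtain ⟨b, hb, rfl⟩ := hs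
        obtain ⟨u, hu⟩ := claim b hb
        exact ⟨u, Subtype.ext (by simpa using hu)⟩
      exact lenB_of_surjective ψ hsurj h
    -- lenB (quotient by S) (n * c)
    have hQS : lenB R ((M ⧸ A) ⧸ S) (n * c) :=
      lenB_of_equiv (Submodule.quotientQuotientEquivQuotient A B hAB).symm ih
    exact lenB_mono (le_of_eq (by ring)) (lenB_ext S hSc hQS)
end Part2

section Part3
variable {R : Type*} [CommRing R] [IsNoetherianRing R] [IsLocalRing R]

/-- A f.g. module killed by the maximal ideal has bounded chains (it is a f.d. vector space). -/
lemma lenB_of_torsion_max (W : Type*) [AddCommGroup W] [Module R W] [Module.Finite R W]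
    (h : maximalIdeal R • (⊤ : Submodule R W) = ⊥) : ∃ n, lenB R W n := by
  have htor : Module.IsTorsionBySet R W (maximalIdeal R : Set R) := by
    intro w a
    have : (a : R) • w ∈ maximalIdeal R • (⊤ : Submodule R W) :=
      Submodule.smul_mem_smul a.2 trivial
    rw [h] at this
    simpa using this
  letI : Module (R ⧸ maximalIdeal R) W := htor.module
  haveI : IsScalarTower R (R ⧸ maximalIdeal R) W := htor.isScalarTower
  letI : Field (R ⧸ maximalIdeal R) := Ideal.Quotient.field _
  haveI : Module.Finite (R ⧸ maximalIdeal R) W :=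
    Module.Finite.of_restrictScalars_finite R _ W
  -- convert R-submodules to k-submodules
  have smul_eq : ∀ (r : R) (w : W), (Ideal.Quotient.mk (maximalIdeal R) r) • w = r • w :=
    fun r w => htor.mk_smul r w
  set F : Submodule R W → Submodule (R ⧸ maximalIdeal R) W := fun P =>
    { toAddSubmonoid := P.toAddSubmonoid
      smul_mem' := by
        intro c w hw
        obtain ⟨r, rfl⟩ := Ideal.Quotient.mk_surjective c
        show ((Ideal.Quotient.mk (maximalIdeal R) r) • w) ∈ P.carrier
        rw [smul_eq]
        exact P.smul_mem r hw } with hF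
  have hFmono : StrictMono F := by
    intro P Q hPQ
    have hle : F P ≤ F Q := fun w hw => hPQ.le hw
    refine lt_of_le_of_ne hle (fun he => hPQ.ne ?_)
    apply SetLike.ext'
    exact congrArg (fun (X : Submodule (R ⧸ maximalIdeal R) W) => (X : Set W)) he
  refine ⟨Module.finrank (R ⧸ maximalIdeal R) W, ?_⟩
  intro q
  have key : ∀ i : Fin (q.length + 1), (i : ℕ) ≤ Module.finrank (R ⧸ maximalIdeal R) (F (q i)) := by
    intro i
    induction i using Fin.induction with
    | zero => simp
    | succ i ih =>
      have hlt : F (q i.castSucc) < F (q i.succ) := hFmono (q.strictMono Fin.castSucc_lt_succ)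
      have := Submodule.finrank_lt_finrank_of_lt hlt
      have hstep : Module.finrank (R ⧸ maximalIdeal R) (F (q i.castSucc)) + 1 ≤ Module.finrank (R ⧸ maximalIdeal R) (F (q i.succ)) :=
        this
      calc ((i.succ : Fin (q.length + 1)) : ℕ) = (i : ℕ) + 1 := by simp
        _ ≤ Module.finrank (R ⧸ maximalIdeal R) (F (q i.castSucc)) + 1 := by
            have h' := ih
            rw [Fin.coe_castSucc] at h'
            omega
        _ ≤ _ := hstep
  have := key (Fin.last q.length)
  simpa using this.trans (Submodule.finrank_le _)

/-- A f.g. module killed by a power of the maximal ideal has bounded chains. -/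
lemma lenB_of_torsion_pow : ∀ (t : ℕ) (W : Type*) [AddCommGroup W] [Module R W]
    [Module.Finite R W], ((maximalIdeal R) ^ t • (⊤ : Submodule R W) = ⊥) → ∃ n, lenB R W n := by
  intro t
  induction t with
  | zero =>
    intro W _ _ _ h
    rw [pow_zero, Ideal.one_eq_top, Submodule.top_smul] at h
    have hz : ∀ w : W, w = 0 := fun w => by
      have : w ∈ (⊤ : Submodule R W) := trivial
      rw [h] at this
      simpa using this
    have : Subsingleton W := subsingleton_of_forall_eq 0 (fun w => hz w)
    exact ⟨0, lenB_of_subsingleton 0⟩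
  | succ t ih =>
    intro W _ _ _ h
    set N : Submodule R W := (maximalIdeal R) ^ t • ⊤ with hN
    haveI : IsNoetherian R W := isNoetherian_of_isNoetherianRing_of_finite R W
    haveI : Module.Finite R N := Module.Finite.iff_fg.2 (IsNoetherian.noetherian N)
    -- W / N killed by m^t
    have h1 : (maximalIdeal R) ^ t • (⊤ : Submodule R (W ⧸ N)) = ⊥ := by
      have heq : Submodule.map N.mkQ ((maximalIdeal R) ^ t • (⊤ : Submodule R W))
          = (maximalIdeal R) ^ t • (⊤ : Submodule R (W ⧸ N)) := by
        rw [Submodule.map_smul'', Submodule.map_top, Submodule.range_mkQ]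
      rw [← heq, ← hN]
      rw [eq_bot_iff]
      rintro x ⟨y, hy, rfl⟩
      simpa using (Submodule.Quotient.mk_eq_zero N).2 hy
    obtain ⟨b, hb⟩ := ih (W ⧸ N) h1
    -- N killed by m
    have h2 : maximalIdeal R • (⊤ : Submodule R N) = ⊥ := by
      have hmap : Submodule.map N.subtype (maximalIdeal R • (⊤ : Submodule R N)) = ⊥ := by
        rw [Submodule.map_smul'', Submodule.map_top, Submodule.range_subtype]
        rw [hN, ← Submodule.smul_assoc, Ideal.smul_eq_mul, ← pow_succ']
        exact h
      apply Submodule.map_injective_of_injective N.injective_subtype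
      rw [Submodule.map_bot, hmap]
    obtain ⟨a, ha⟩ := lenB_of_torsion_max N h2
    exact ⟨a + b, lenB_ext N ha hb⟩
end Part3

section Part4
variable {R : Type*} [CommRing R] [IsNoetherianRing R] [IsLocalRing R]

/-- System of parameters: if chains of primes over `J` have length at most `d`, there are
`d` elements of the maximal ideal which together with `J` are contained in no prime but `m`. -/
lemma exists_sop : ∀ (d : ℕ) (J : Ideal R), J ≤ maximalIdeal R →
    (∀ l : LTSeries {P : Ideal R // P.IsPrime ∧ J ≤ P}, l.length ≤ d) →
    ∃ y : Fin d → R, (∀ i, y i ∈ maximalIdeal R) ∧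
      ∀ P : Ideal R, P.IsPrime → J ≤ P → (∀ i, y i ∈ P) → P = maximalIdeal R := by
  intro d
  induction d with
  | zero =>
    intro J hJ hchain
    refine ⟨Fin.elim0, fun i => i.elim0, fun P hP hJP _ => ?_⟩
    by_contra hne
    have hPm : P < maximalIdeal R :=
      lt_of_le_of_ne (le_maximalIdeal hP.ne_top) hne
    have hm : (maximalIdeal R).IsPrime := (maximalIdeal.isMaximal R).isPrime
    set l : LTSeries {P : Ideal R // P.IsPrime ∧ J ≤ P} :=
      RelSeries.cons (RelSeries.singleton _ ⟨maximalIdeal R, hm, hJ⟩) ⟨P, hP, hJP⟩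
        (by exact hPm) with hl
    have := hchain l
    exact absurd (show l.length ≤ 0 from this) (by rw [show l.length = 1 from rfl]; omega)
  | succ d ih =>
    intro J hJ hchain
    by_cases hm : maximalIdeal R ∈ J.minimalPrimes
    · refine ⟨fun _ => 0, fun _ => zero_mem _, fun P hP hJP _ => ?_⟩
      exact le_antisymm (le_maximalIdeal hP.ne_top) (hm.2 ⟨hP, hJP⟩ (le_maximalIdeal hP.ne_top))
    · -- prime avoidance to get x ∈ m   avoiding all minimal primes of J
      have hfin : J.minimalPrimes.Finite := by
        rw [Ideal.minimalPrimes_eq_comap]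
        exact ((minimalPrimes.finite_of_isNoetherianRing (R ⧸ J)).image _)
      obtain ⟨x, hxm, hxnot⟩ :
          ∃ x ∈ maximalIdeal R, ∀ p ∈ J.minimalPrimes, x ∉ p := by
        by_contra hcon
        push_neg at hcon
        have hsub : (maximalIdeal R : Set R) ⊆ ⋃ p ∈ hfin.toFinset, (p : Set R) := by
          intro x hx
          obtain ⟨p, hp, hxp⟩ := hcon x hx
          exact Set.mem_biUnion (hfin.mem_toFinset.2 hp) hxp
        have := (Ideal.subset_union_prime (⊥ : Ideal R) ⊥
          (fun p hp _ _ => (hfin.mem_toFinset.1 hp).1.1)).1 hsub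
        obtain ⟨p, hp, hmp⟩ := this
        have hp' := hfin.mem_toFinset.1 hp
        have : p = maximalIdeal R :=
          le_antisymm (le_maximalIdeal hp'.1.1.ne_top) hmp
        exact hm (this ▸ hp')
      set J' : Ideal R := J ⊔ Ideal.span {x} with hJ'
      have hJ'm : J' ≤ maximalIdeal R :=
        sup_le hJ (Ideal.span_le.2 (Set.singleton_subset_iff.2 hxm))
      have hchain' : ∀ l : LTSeries {P : Ideal R // P.IsPrime ∧ J' ≤ P}, l.length ≤ d := by
        intro l
        by_contra hlen
        -- map to chains over J and prepend a minimal prime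
        set g : {P : Ideal R // P.IsPrime ∧ J' ≤ P} → {P : Ideal R // P.IsPrime ∧ J ≤ P} :=
          fun P => ⟨P.1, P.2.1, le_trans le_sup_left P.2.2⟩ with hg
        have hgmono : StrictMono g := fun a b hab => by
          simpa [hg, Subtype.mk_lt_mk] using hab
        set l2 := l.map g hgmono with hl2
        have hhead : J ≤ l2.head.1 := l2.head.2.2
        haveI : l2.head.1.IsPrime := l2.head.2.1
        obtain ⟨p, hpmin, hple⟩ := Ideal.exists_minimalPrimes_le hhead
        have hplt : p < l2.head.1 := by
          refine lt_of_le_of_ne hple (fun he => ?_)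
          have hxin : x ∈ l.head.1 :=
            (le_trans le_sup_right l.head.2.2) (Ideal.subset_span rfl)
          have : l2.head.1 = l.head.1 := by
            rw [hl2, LTSeries.head_map]
          exact hxnot p hpmin (he ▸ (this ▸ hxin))
        set l3 : LTSeries {P : Ideal R // P.IsPrime ∧ J ≤ P} :=
          RelSeries.cons l2 ⟨p, hpmin.1.1, hpmin.1.2⟩ (by exact hplt) with hl3
        have := hchain l3
        have hlen3 : l3.length = l.length + 1 := by
          simp [hl3, hl2]
        omega
      obtain ⟨y, hym, hyP⟩ := ih J' hJ'm hchain'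
      refine ⟨Fin.cons x y, ?_, ?_⟩
      · intro i
        refine Fin.cases ?_ ?_ i
        · simpa using hxm
        · intro j; simpa using hym j
      · intro P hP hJP hall
        have hxP : x ∈ P := by simpa using hall 0
        have hJ'P : J' ≤ P :=
          sup_le hJP (Ideal.span_le.2 (Set.singleton_subset_iff.2 hxP))
        refine hyP P hP hJ'P (fun j => ?_)
        simpa using hall j.succ
end Part4

section Part5
variable {R : Type*} [CommRing R]

universe u

lemma lenB_pow_multi : ∀ (d : ℕ) (y : Fin d → R) (M : Type u) [AddCommGroup M] [Module R M]
    (c : ℕ), lenB R (M ⧸ (Ideal.span (Set.range y)) • (⊤ : Submodule R M)) c →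
    ∀ n : ℕ, lenB R (M ⧸ (Ideal.span (Set.range (fun i => y i ^ n))) • (⊤ : Submodule R M))
      (n ^ d * c) := by
  intro d
  induction d with
  | zero =>
    intro y M _ _ c h n
    have h0 : ∀ (z : Fin 0 → R), Set.range z = (∅ : Set R) := fun z => Set.range_eq_empty z
    rw [h0] at h
    rw [h0]
    simpa using h
  | succ d ih =>
    intro y M _ _ c h n
    set a : R := y 0 with ha
    set y' : Fin d → R := Fin.tail y with hy'
    have hdecomp : ∀ m : ℕ, Ideal.span (Set.range (fun i => y i ^ m))
        = Ideal.span {a ^ m} ⊔ Ideal.span (Set.range (fun i => y' i ^ m)) := by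
      intro m
      have : (fun i => y i ^ m) = Fin.cons (a ^ m) (fun i => y' i ^ m) := by
        funext i
        refine Fin.cases ?_ ?_ i
        · simp [ha]
        · intro j
          simp [hy', Fin.tail]
      rw [this, Fin.range_cons, Ideal.span_insert]
    set J : Ideal R := Ideal.span (Set.range y') with hJ
    set Jn : Ideal R := Ideal.span (Set.range (fun i => y' i ^ n)) with hJn
    have h1 : lenB R (M ⧸ (J ⊔ Ideal.span {a}) • (⊤ : Submodule R M)) c := by
      have e : Ideal.span (Set.range y) = J ⊔ Ideal.span {a} := by
        have := hdecomp 1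
        simpa [pow_one, sup_comm] using this
      rwa [e] at h
    have h2 : lenB R ((M ⧸ J • (⊤ : Submodule R M)) ⧸
        (Ideal.span {a}) • (⊤ : Submodule R (M ⧸ J • (⊤ : Submodule R M)))) c :=
      lenB_of_equiv (quotSupEquiv J (Ideal.span {a})).symm h1
    have h3 := lenB_pow_single a h2 n
    have h4 : lenB R (M ⧸ (Ideal.span {a ^ n} ⊔ J) • (⊤ : Submodule R M)) (n * c) := by
      have := lenB_of_equiv (quotSupEquiv J (Ideal.span {a ^ n})) h3
      rwa [sup_comm J] at this
    have h6 : lenB R ((M ⧸ (Ideal.span {a ^ n}) • (⊤ : Submodule R M)) ⧸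
        J • (⊤ : Submodule R (M ⧸ (Ideal.span {a ^ n}) • (⊤ : Submodule R M)))) (n * c) :=
      lenB_of_equiv (quotSupEquiv (Ideal.span {a ^ n}) J).symm h4
    have h7 := ih y' (M ⧸ (Ideal.span {a ^ n}) • (⊤ : Submodule R M)) (n * c) h6 n
    have h8 : lenB R (M ⧸ (Ideal.span {a ^ n} ⊔ Jn) • (⊤ : Submodule R M)) (n ^ d * (n * c)) :=
      lenB_of_equiv (quotSupEquiv (Ideal.span {a ^ n}) Jn) h7
    rw [hdecomp n]
    exact lenB_mono (le_of_eq (by ring)) h8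
end Part5

theorem stmt_7 (R : Type*) [CommRing R] [IsNoetherianRing R] [IsLocalRing R]
    (p : ℕ) (hp : p.Prime) [CharP R p] (I : Ideal R) (hprim : I.radical = maximalIdeal R)
    (M : Type*) [AddCommGroup M] [Module R M] [Module.Finite R M]
    (dM : ℕ) (hdM : ringKrullDim (R ⧸ Module.annihilator R M) = dM) :
    ∃ α : ℝ, 0 < α ∧ ∀ e : ℕ, ∃ n : ℕ,
      mlen R (M ⧸ (frobPow I (p ^ e) • (⊤ : Submodule R M))) = n ∧
      (n : ℝ) ≤ α * (p : ℝ) ^ (e * dM) := by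
  classical
  set Ann := Module.annihilator R M with hAnn
  -- M is nontrivial
  have hMnt : Ann ≠ ⊤ := by
    intro htop
    have : Subsingleton (R ⧸ Ann) := by
      rw [htop] at *
      exact Ideal.Quotient.subsingleton_iff.2 rfl
    rw [ringKrullDim_eq_bot_of_subsingleton] at hdM
    exact (by simp : (⊥ : WithBot (WithTop ℕ)) ≠ (dM : WithBot (WithTop ℕ))) hdM
  have hAnnle : Ann ≤ maximalIdeal R := le_maximalIdeal hMnt
  -- chains of primes over Ann are bounded by dM
  have hchain : ∀ l : LTSeries {P : Ideal R // P.IsPrime ∧ Ann ≤ P}, l.length ≤ dM := by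
    intro l
    set f : {P : Ideal R // P.IsPrime ∧ Ann ≤ P} → PrimeSpectrum (R ⧸ Ann) := fun P =>
      ⟨Ideal.map (Ideal.Quotient.mk Ann) P.1,
        Ideal.map_isPrime_of_surjective Ideal.Quotient.mk_surjective
          (by rw [Ideal.mk_ker]; exact P.2.2) (H := P.2.1)⟩ with hf
    have hcomap : ∀ P : {P : Ideal R // P.IsPrime ∧ Ann ≤ P},
        Ideal.comap (Ideal.Quotient.mk Ann) (Ideal.map (Ideal.Quotient.mk Ann) P.1) = P.1 := by
      intro P
      rw [Ideal.comap_map_of_surjective _ Ideal.Quotient.mk_surjective, ← RingHom.ker_eq_comap_bot,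
        Ideal.mk_ker, sup_eq_left.2 P.2.2]
    have hfmono : StrictMono f := by
      intro P Q hPQ
      rw [← PrimeSpectrum.asIdeal_lt_asIdeal]
      refine lt_of_le_of_ne (Ideal.map_mono hPQ.le) (fun he => hPQ.ne ?_)
      apply Subtype.ext
      have := congrArg (Ideal.comap (Ideal.Quotient.mk Ann)) he
      rwa [hcomap P, hcomap Q] at this
    have hlen := Order.LTSeries.length_le_krullDim (l.map f hfmono)
    rw [show Order.krullDim (PrimeSpectrum (R ⧸ Ann)) = ringKrullDim (R ⧸ Ann) from rfl,
      hdM] at hlen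
    exact_mod_cast hlen
  -- system of parameters
  obtain ⟨y, hym, hyP⟩ := exists_sop dM Ann hAnnle hchain
  set K : Ideal R := Ann ⊔ Ideal.span (Set.range y) with hK
  have hKrad : K.radical = maximalIdeal R := by
    rw [Ideal.radical_eq_sInf]
    apply le_antisymm
    · apply sInf_le
      exact ⟨sup_le hAnnle (Ideal.span_le.2 (Set.range_subset_iff.2 hym)),
        (maximalIdeal.isMaximal R).isPrime⟩
    · apply le_sInf
      rintro P ⟨hKP, hP⟩
      have := hyP P hP (le_trans le_sup_left hKP)
        (fun i => (le_trans le_sup_right hKP) (Ideal.subset_span ⟨i, rfl⟩))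
      rw [this]
  -- m^t ⊆ K
  obtain ⟨t, ht⟩ : ∃ t, (maximalIdeal R) ^ t ≤ K := by
    refine Ideal.exists_pow_le_of_le_radical_of_fg (hKrad ▸ le_rfl) ?_
    exact IsNoetherian.noetherian _
  -- m^k ⊆ I
  obtain ⟨k, hk⟩ : ∃ k, (maximalIdeal R) ^ k ≤ I := by
    refine Ideal.exists_pow_le_of_le_radical_of_fg (hprim ▸ le_rfl) ?_
    exact IsNoetherian.noetherian _
  -- the base module W = M / (y) M has finite length
  set J : Ideal R := Ideal.span (Set.range y) with hJ
  have hAnnSmul : Ann • (⊤ : Submodule R M) = ⊥ := by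
    rw [eq_bot_iff]
    intro z hz
    refine Submodule.smul_induction_on hz ?_ ?_
    · intro r hr n _
      simp [Module.mem_annihilator.1 hr n]
    · intro a b ha hb
      simpa using Submodule.add_mem ⊥ ha hb
  have hWtor : (maximalIdeal R) ^ t • (⊤ : Submodule R (M ⧸ J • (⊤ : Submodule R M))) = ⊥ := by
    have h1 : (maximalIdeal R) ^ t • (⊤ : Submodule R (M ⧸ J • (⊤ : Submodule R M)))
        = Submodule.map (J • (⊤ : Submodule R M)).mkQ ((maximalIdeal R) ^ t • ⊤) := by
      rw [Submodule.map_smul'', Submodule.map_top, Submodule.range_mkQ]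
    rw [h1, eq_bot_iff]
    rintro x ⟨z, hz, rfl⟩
    have hzK : z ∈ K • (⊤ : Submodule R M) := Submodule.smul_mono ht le_rfl hz
    rw [hK, Submodule.sup_smul, hAnnSmul, bot_sup_eq] at hzK
    simpa using (Submodule.Quotient.mk_eq_zero _).2 hzK
  obtain ⟨B, hB⟩ := lenB_of_torsion_pow t (M ⧸ J • (⊤ : Submodule R M)) hWtor
  -- main bound
  refine ⟨(k ^ dM * B : ℕ) + 1, by positivity, ?_⟩
  intro e
  set q := p ^ e with hq
  -- span of (y i)^(k*q) is contained in frobPow I q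
  have hspan : Ideal.span (Set.range (fun i => y i ^ (k * q))) ≤ frobPow I q := by
    rw [Ideal.span_le]
    rintro _ ⟨i, rfl⟩
    have h1 : y i ^ k ∈ I := hk (Ideal.pow_mem_pow (hym i) k)
    show y i ^ (k * q) ∈ frobPow I q
    rw [pow_mul]
    exact Ideal.subset_span ⟨y i ^ k, h1, rfl⟩
  have hbound : lenB R (M ⧸ frobPow I q • (⊤ : Submodule R M)) ((k * q) ^ dM * B) :=
    lenB_quot_mono hspan (lenB_pow_multi dM y M B hB (k * q))
  obtain ⟨n, hn, hnle⟩ := mlen_eq_of_lenB hbound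
  refine ⟨n, hn, ?_⟩
  have hle : (n : ℝ) ≤ ((k * q) ^ dM * B : ℕ) := by exact_mod_cast hnle
  refine hle.trans ?_
  have hqd : ((q : ℝ)) ^ dM = (p : ℝ) ^ (e * dM) := by
    rw [hq]
    push_cast
    rw [← pow_mul]
  have hppos : (0:ℝ) < (p : ℝ) ^ (e * dM) := by
    have : (0:ℝ) < p := by exact_mod_cast hp.pos
    positivity
  push_cast
  rw [mul_pow]
  calc (k:ℝ) ^ dM * (q:ℝ) ^ dM * B = ((k:ℝ) ^ dM * B) * ((p:ℝ) ^ (e * dM)) := by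
        rw [← hqd]; ring
    _ ≤ ((k:ℝ) ^ dM * B + 1) * ((p:ℝ) ^ (e * dM)) := by nlinarith

end
end

section
/- Let (R, m) be a Noetherian local ring of prime characteristic p, let N be an ideal of R, set A = R/N, and let I be an m-primary ideal of R. Then there exists a constant β > 0 such that 0 ≤ ℓ_R(R/I^{[p^e]}) − ℓ_A(A/I^{[p^e]}A) ≤ β · p^{e·dim N} for all e ≥ 0, where dim N denotes the Krull dimension of R/ann(N). -/
/-!
Statement 8 (Corollary 4.12): for a Noetherian local ring `(R,m)` of prime characteristic `p`,
an ideal `N` with `A = R/N`, and an `m`-primary ideal `I`, there is `β > 0` with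
`0 ≤ ℓ_R(R/I^{[p^e]}) − ℓ_A(A/I^{[p^e]}A) ≤ β · p^{e·dim N}` for all `e ≥ 0`.
-/

open Filter IsLocalRing

noncomputable section

namespace Stmt8
open Order Submodule



lemma height_add_one_le {α : Type*} [Preorder α] {x y : α} (h : x < y) :
    Order.height x + 1 ≤ Order.height y := by
  rcases eq_or_ne (Order.height x) ⊤ with hx | hx
  · have hle : Order.height x ≤ Order.height y := Order.height_mono h.le
    rw [hx] at hle ⊢
    rw [top_le_iff.mp hle]
    simp
  · exact (ENat.add_one_le_iff hx).mpr
      (Order.height_strictMono h (lt_of_le_of_ne le_top hx))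

lemma krullDim_le_add {L : Type*} [Lattice L] [IsModularLattice L] (a : L) :
    Order.krullDim L ≤
      Order.krullDim {x : L // x ≤ a} + Order.krullDim {x : L // a ≤ x} := by
  have : Nonempty L := ⟨a⟩
  have h1 : Nonempty {x : L // x ≤ a} := ⟨⟨a, le_rfl⟩⟩
  have h2 : Nonempty {x : L // a ≤ x} := ⟨⟨a, le_rfl⟩⟩
  rw [Order.krullDim_eq_iSup_length, Order.krullDim_eq_iSup_length,
    Order.krullDim_eq_iSup_length, ← WithBot.coe_add, WithBot.coe_le_coe]
  refine iSup_le fun p => ?_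
  set A : ℕ∞ := ⨆ (q : LTSeries {x : L // x ≤ a}), (q.length : ℕ∞) with hA
  set B : ℕ∞ := ⨆ (q : LTSeries {x : L // a ≤ x}), (q.length : ℕ∞) with hB
  have key : ∀ k : ℕ, ∀ h : k < p.length + 1,
      (k : ℕ∞) ≤ Order.height (⟨p ⟨k, h⟩ ⊓ a, inf_le_right⟩ : {x : L // x ≤ a})
        + Order.height (⟨p ⟨k, h⟩ ⊔ a, le_sup_right⟩ : {x : L // a ≤ x}) := by
    intro k
    induction k with
    | zero => intro h; simp
    | succ k ih =>
      intro h
      have hk : k < p.length + 1 := Nat.lt_of_succ_lt h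
      have hstep : p ⟨k, hk⟩ < p ⟨k + 1, h⟩ := by
        have hs := p.step ⟨k, by omega⟩
        exact hs
      by_cases hc : p ⟨k, hk⟩ ⊓ a < p ⟨k + 1, h⟩ ⊓ a
      · have h1' : Order.height (⟨p ⟨k, hk⟩ ⊓ a, inf_le_right⟩ : {x : L // x ≤ a}) + 1 ≤
            Order.height (⟨p ⟨k + 1, h⟩ ⊓ a, inf_le_right⟩ : {x : L // x ≤ a}) :=
          height_add_one_le (Subtype.mk_lt_mk.mpr hc)
        have h2' : Order.height (⟨p ⟨k, hk⟩ ⊔ a, le_sup_right⟩ : {x : L // a ≤ x}) ≤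
            Order.height (⟨p ⟨k + 1, h⟩ ⊔ a, le_sup_right⟩ : {x : L // a ≤ x}) :=
          Order.height_mono (Subtype.mk_le_mk.mpr (sup_le_sup_right hstep.le a))
        calc ((k + 1 : ℕ) : ℕ∞) = (k : ℕ∞) + 1 := by push_cast; ring
          _ ≤ (Order.height (⟨p ⟨k, hk⟩ ⊓ a, inf_le_right⟩ : {x : L // x ≤ a})
              + Order.height (⟨p ⟨k, hk⟩ ⊔ a, le_sup_right⟩ : {x : L // a ≤ x})) + 1 :=
            add_le_add_left (ih hk) 1
          _ = (Order.height (⟨p ⟨k, hk⟩ ⊓ a, inf_le_right⟩ : {x : L // x ≤ a}) + 1)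
              + Order.height (⟨p ⟨k, hk⟩ ⊔ a, le_sup_right⟩ : {x : L // a ≤ x}) := by ring
          _ ≤ _ := add_le_add h1' h2'
      · have hinf : p ⟨k + 1, h⟩ ⊓ a ≤ p ⟨k, hk⟩ ⊓ a := by
          rcases (inf_le_inf_right a hstep.le).lt_or_eq with h' | h'
          · exact absurd h' hc
          · exact h'.ge
        have hsup : p ⟨k, hk⟩ ⊔ a < p ⟨k + 1, h⟩ ⊔ a :=
          sup_lt_sup_of_lt_of_inf_le_inf hstep hinf
        have h1' : Order.height (⟨p ⟨k, hk⟩ ⊓ a, inf_le_right⟩ : {x : L // x ≤ a}) ≤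
            Order.height (⟨p ⟨k + 1, h⟩ ⊓ a, inf_le_right⟩ : {x : L // x ≤ a}) :=
          Order.height_mono (Subtype.mk_le_mk.mpr (inf_le_inf_right a hstep.le))
        have h2' : Order.height (⟨p ⟨k, hk⟩ ⊔ a, le_sup_right⟩ : {x : L // a ≤ x}) + 1 ≤
            Order.height (⟨p ⟨k + 1, h⟩ ⊔ a, le_sup_right⟩ : {x : L // a ≤ x}) :=
          height_add_one_le (Subtype.mk_lt_mk.mpr hsup)
        calc ((k + 1 : ℕ) : ℕ∞) = (k : ℕ∞) + 1 := by push_cast; ring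
          _ ≤ (Order.height (⟨p ⟨k, hk⟩ ⊓ a, inf_le_right⟩ : {x : L // x ≤ a})
              + Order.height (⟨p ⟨k, hk⟩ ⊔ a, le_sup_right⟩ : {x : L // a ≤ x})) + 1 :=
            add_le_add_left (ih hk) 1
          _ = Order.height (⟨p ⟨k, hk⟩ ⊓ a, inf_le_right⟩ : {x : L // x ≤ a})
              + (Order.height (⟨p ⟨k, hk⟩ ⊔ a, le_sup_right⟩ : {x : L // a ≤ x}) + 1) := by ring
          _ ≤ _ := add_le_add h1' h2'
  have hlast := key p.length (by omega)
  refine hlast.trans (add_le_add ?_ ?_)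
  · have := Order.height_le_krullDim
      (⟨p ⟨p.length, by omega⟩ ⊓ a, inf_le_right⟩ : {x : L // x ≤ a})
    rw [Order.krullDim_eq_iSup_length] at this
    exact_mod_cast this
  · have := Order.height_le_krullDim
      (⟨p ⟨p.length, by omega⟩ ⊔ a, le_sup_right⟩ : {x : L // a ≤ x})
    rw [Order.krullDim_eq_iSup_length] at this
    exact_mod_cast this


variable {R : Type*} [CommRing R] {M M' M'' : Type*}
  [AddCommGroup M] [Module R M] [AddCommGroup M'] [Module R M']
  [AddCommGroup M''] [Module R M'']

lemma mlen_coe (R M : Type*) [Semiring R] [AddCommGroup M] [Module R M] :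
    (mlen R M : WithBot ℕ∞) = Order.krullDim (Submodule R M) := by
  have hne : Nonempty (Submodule R M) := ⟨⊥⟩
  have h0 : (0 : WithBot ℕ∞) ≤ Order.krullDim (Submodule R M) :=
    Order.krullDim_nonneg
  have hbot : Order.krullDim (Submodule R M) ≠ ⊥ := by
    intro hc; rw [hc] at h0; exact absurd h0 (by simp)
  obtain ⟨n, hn⟩ := WithBot.ne_bot_iff_exists.mp hbot
  rw [mlen, ← hn, WithBot.unbotD_coe]

lemma mlen_le_of_strictMono {R' : Type*} [Semiring R'] {N : Type*} [AddCommGroup N] [Module R' N]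
    (f : Submodule R M → Submodule R' N) (hf : StrictMono f) :
    mlen R M ≤ mlen R' N := by
  have := Order.krullDim_le_of_strictMono f hf
  rw [← mlen_coe, ← mlen_coe] at this
  exact_mod_cast this

lemma mlen_eq_of_linearEquiv (e : M ≃ₗ[R] M') : mlen R M = mlen R M' := by
  have := Order.krullDim_eq_of_orderIso (Submodule.orderIsoMapComap e)
  rw [← mlen_coe, ← mlen_coe] at this
  exact_mod_cast this

lemma mlen_le_of_surjective (f : M →ₗ[R] M') (hf : Function.Surjective f) :
    mlen R M' ≤ mlen R M := by
  refine mlen_le_of_strictMono (Submodule.comap f) fun a b hab => ?_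
  refine lt_of_le_of_ne (Submodule.comap_mono hab.le) fun hc => hab.ne ?_
  rw [← Submodule.map_comap_eq_of_surjective hf a, ← Submodule.map_comap_eq_of_surjective hf b, hc]

lemma mlen_le_of_injective (f : M →ₗ[R] M') (hf : Function.Injective f) :
    mlen R M ≤ mlen R M' := by
  refine mlen_le_of_strictMono (Submodule.map f) fun a b hab => ?_
  refine lt_of_le_of_ne (Submodule.map_mono hab.le) fun hc => hab.ne ?_
  rw [← Submodule.comap_map_eq_of_injective hf a, ← Submodule.comap_map_eq_of_injective hf b, hc]

lemma mlen_le_of_forall_length {c : ℕ∞}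
    (h : ∀ p : LTSeries (Submodule R M), (p.length : ℕ∞) ≤ c) : mlen R M ≤ c := by
  have hne : Nonempty (Submodule R M) := ⟨⊥⟩
  have : Order.krullDim (Submodule R M) ≤ (c : WithBot ℕ∞) := by
    rw [Order.krullDim_eq_iSup_length, WithBot.coe_le_coe]
    exact iSup_le h
  rw [← mlen_coe] at this
  exact_mod_cast this

lemma mlen_subsingleton [Subsingleton M] : mlen R M = 0 := by
  refine le_antisymm (mlen_le_of_forall_length fun p => ?_) zero_le
  have : ∀ S T : Submodule R M, S = T := fun S T => by
    ext x; rw [Subsingleton.elim x 0]; simp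
  have hlen : p.length = 0 := by
    by_contra hl
    exact (p.step ⟨0, by omega⟩).ne (this _ _)
  simp [hlen]

lemma mlen_le_one_of_simple [IsSimpleModule R M] : mlen R M ≤ 1 := by
  refine mlen_le_of_forall_length fun p => ?_
  have : (p.length : ℕ) ≤ 1 := by
    by_contra hl
    push_neg at hl
    have h01 : p ⟨0, by omega⟩ < p ⟨1, by omega⟩ := p.step ⟨0, by omega⟩
    have h12 : p ⟨1, by omega⟩ < p ⟨2, by omega⟩ := p.step ⟨1, by omega⟩
    rcases eq_bot_or_eq_top (p ⟨1, by omega⟩) with h | h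
    · rw [h] at h01; exact (not_lt_bot h01)
    · rw [h] at h12; exact (not_top_lt h12)
  exact_mod_cast this

lemma mlen_range_le (ψ : M →ₗ[R] M') (U : Submodule R M) (hU : U ≤ LinearMap.ker ψ) :
    mlen R ↥(LinearMap.range ψ) ≤ mlen R (M ⧸ U) := by
  have he : mlen R ↥(LinearMap.range ψ) = mlen R ↥(LinearMap.range (U.liftQ ψ hU)) :=
    mlen_eq_of_linearEquiv (LinearEquiv.ofEq _ _ (Submodule.range_liftQ U ψ hU).symm)
  rw [he]
  exact mlen_le_of_surjective (U.liftQ ψ hU).rangeRestrict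
    (LinearMap.surjective_rangeRestrict _)

lemma mlen_add (S : Submodule R M) : mlen R M ≤ mlen R ↥S + mlen R (M ⧸ S) := by
  have h := krullDim_le_add (L := Submodule R M) S
  have e1 : Order.krullDim {x : Submodule R M // x ≤ S} = Order.krullDim (Submodule R ↥S) :=
    (Order.krullDim_eq_of_orderIso (Submodule.MapSubtype.orderIso S)).symm
  have e2 : Order.krullDim {x : Submodule R M // S ≤ x} = Order.krullDim (Submodule R (M ⧸ S)) :=
    (Order.krullDim_eq_of_orderIso (Submodule.comapMkQRelIso S)).symm
  rw [e1, e2, ← mlen_coe, ← mlen_coe, ← mlen_coe, ← WithBot.coe_add, WithBot.coe_le_coe] at h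
  exact h

lemma map_mkQ_self (p : Submodule R M) : Submodule.map p.mkQ p = ⊥ := by
  refine le_bot_iff.mp (Submodule.map_le_iff_le_comap.mpr ?_)
  rw [Submodule.comap_bot, Submodule.ker_mkQ]

lemma mlen_quot_smul_equiv (e : M ≃ₗ[R] M') (W : Ideal R) :
    mlen R (M ⧸ (W • ⊤ : Submodule R M)) = mlen R (M' ⧸ (W • ⊤ : Submodule R M')) := by
  have hmap : Submodule.map (e : M →ₗ[R] M') (W • ⊤ : Submodule R M)
      = (W • ⊤ : Submodule R M') := by
    have hr : LinearMap.range (e : M →ₗ[R] M') = ⊤ := LinearMap.range_eq_top.mpr e.surjective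
    rw [Submodule.map_smul'', Submodule.map_top, hr]
  exact mlen_eq_of_linearEquiv (Submodule.Quotient.equiv _ _ e hmap)

lemma mlen_devissage (W : Ideal R) (S : Submodule R M) (ψ : M' →ₗ[R] M)
    (hrange : LinearMap.range ψ = S) (U : Submodule R M')
    (hU : ∀ u ∈ U, ψ u ∈ (W • ⊤ : Submodule R M)) :
    mlen R (M ⧸ (W • ⊤ : Submodule R M)) ≤
      mlen R (M' ⧸ U) + mlen R ((M ⧸ S) ⧸ (W • ⊤ : Submodule R (M ⧸ S))) := by
  set WT : Submodule R M := W • ⊤ with hWT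
  have h1 := mlen_add (M := M ⧸ WT) (Submodule.map WT.mkQ S)
  have hsub : mlen R ↥(Submodule.map WT.mkQ S) ≤ mlen R (M' ⧸ U) := by
    have hr : LinearMap.range (WT.mkQ ∘ₗ ψ) = Submodule.map WT.mkQ S := by
      rw [LinearMap.range_comp, hrange]
    have hker : U ≤ LinearMap.ker (WT.mkQ ∘ₗ ψ) := by
      intro u hu
      simp only [LinearMap.mem_ker, LinearMap.comp_apply, Submodule.mkQ_apply,
        Submodule.Quotient.mk_eq_zero]
      exact hU u hu
    rw [← hr]
    exact mlen_range_le _ U hker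
  have hquot : mlen R ((M ⧸ WT) ⧸ (Submodule.map WT.mkQ S)) =
      mlen R ((M ⧸ S) ⧸ (W • ⊤ : Submodule R (M ⧸ S))) := by
    have hmap1 : Submodule.map WT.mkQ (S ⊔ WT) = Submodule.map WT.mkQ S := by
      rw [Submodule.map_sup, map_mkQ_self, sup_bot_eq]
    have hmap2 : Submodule.map S.mkQ (S ⊔ WT) = (W • ⊤ : Submodule R (M ⧸ S)) := by
      rw [Submodule.map_sup, map_mkQ_self, bot_sup_eq, hWT, Submodule.map_smul'',
        Submodule.map_top, Submodule.range_mkQ]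
    have e1 := Submodule.quotientQuotientEquivQuotient WT (S ⊔ WT) le_sup_right
    have e2 := Submodule.quotientQuotientEquivQuotient S (S ⊔ WT) le_sup_left
    rw [hmap1] at e1
    rw [hmap2] at e2
    exact (mlen_eq_of_linearEquiv e1).trans (mlen_eq_of_linearEquiv e2.symm)
  rw [hquot] at h1
  exact h1.trans (add_le_add hsub le_rfl)


section ChainCond
variable {R : Type*} [CommRing R]

/-- Chains of primes over `J` have length at most `d`. -/
def chainCond (R : Type*) [CommRing R] (J : Ideal R) (d : ℕ) : Prop :=
  ∀ c : LTSeries (PrimeSpectrum R), J ≤ c.head.asIdeal → c.length ≤ d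

lemma chainCond_mono {J J' : Ideal R} (h : J ≤ J') {d : ℕ} (H : chainCond R J d) :
    chainCond R J' d := fun c hc => H c (h.trans hc)

lemma head_asIdeal_le {c : LTSeries (PrimeSpectrum R)} (i : Fin (c.length + 1)) :
    c.head.asIdeal ≤ (c i).asIdeal :=
  (PrimeSpectrum.asIdeal_le_asIdeal _ _).mpr (c.monotone (Fin.zero_le i))

lemma chainCond_of_ringKrullDim {J : Ideal R} {d : ℕ}
    (h : ringKrullDim (R ⧸ J) ≤ (d : WithBot ℕ∞)) : chainCond R J d := by
  intro c hc
  have hJ : ∀ i, J ≤ (c i).asIdeal := fun i => hc.trans (head_asIdeal_le i)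
  have hprime : ∀ i : Fin (c.length + 1),
      (Ideal.map (Ideal.Quotient.mk J) (c i).asIdeal).IsPrime := by
    intro i
    haveI := (c i).isPrime
    exact Ideal.map_isPrime_of_surjective Ideal.Quotient.mk_surjective
      (by rw [Ideal.mk_ker]; exact hJ i)
  have hcomap : ∀ i, Ideal.comap (Ideal.Quotient.mk J)
      (Ideal.map (Ideal.Quotient.mk J) (c i).asIdeal) = (c i).asIdeal := by
    intro i
    rw [Ideal.comap_map_of_surjective _ Ideal.Quotient.mk_surjective]
    rw [← RingHom.ker_eq_comap_bot, Ideal.mk_ker]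
    exact sup_eq_left.mpr (hJ i)
  let c' : LTSeries (PrimeSpectrum (R ⧸ J)) :=
    ⟨c.length, fun i => ⟨Ideal.map (Ideal.Quotient.mk J) (c i).asIdeal, hprime i⟩, by
      intro i
      have hlt : (c i.castSucc).asIdeal < (c i.succ).asIdeal :=
        (PrimeSpectrum.asIdeal_lt_asIdeal _ _).mpr (c.step i)
      show (_ : PrimeSpectrum (R ⧸ J)) < _
      rw [← PrimeSpectrum.asIdeal_lt_asIdeal]
      refine lt_of_le_of_ne (Ideal.map_mono hlt.le) fun hcon => hlt.ne ?_
      rw [← hcomap i.castSucc, ← hcomap i.succ]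
      exact congrArg (Ideal.comap (Ideal.Quotient.mk J)) hcon⟩
  have hlen := LTSeries.length_le_krullDim c'
  rw [show Order.krullDim (PrimeSpectrum (R ⧸ J)) = ringKrullDim (R ⧸ J) from rfl] at hlen
  have : (c.length : WithBot ℕ∞) ≤ (d : WithBot ℕ∞) := le_trans hlen h
  exact_mod_cast this

lemma chainCond_pow_zero [IsLocalRing R] {I : Ideal R} (hprim : I.radical = maximalIdeal R)
    {s : ℕ} (hs : s ≠ 0) : chainCond R (I ^ s) 0 := by
  intro c hc
  have hm : ∀ i, (c i).asIdeal = maximalIdeal R := by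
    intro i
    have h1 : I ^ s ≤ (c i).asIdeal := hc.trans (head_asIdeal_le i)
    have h2 := Ideal.radical_mono h1
    rw [Ideal.radical_pow _ hs, hprim, (c i).isPrime.radical] at h2
    exact le_antisymm (le_maximalIdeal (c i).isPrime.ne_top) h2
  by_contra hlen
  exact (c.step ⟨0, by omega⟩).ne (PrimeSpectrum.ext (by rw [hm, hm]))

lemma one_le_of_chainCond_ne [IsLocalRing R] {p : Ideal R} (hp : p.IsPrime)
    (hpm : p ≠ maximalIdeal R) {d : ℕ} (H : chainCond R p d) : 1 ≤ d := by
  have hlt : p < maximalIdeal R := lt_of_le_of_ne (le_maximalIdeal hp.ne_top) hpm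
  haveI := (maximalIdeal.isMaximal R).isPrime
  let a : PrimeSpectrum R := ⟨p, hp⟩
  let b : PrimeSpectrum R := ⟨maximalIdeal R, inferInstance⟩
  have hab : a < b := (PrimeSpectrum.asIdeal_lt_asIdeal a b).mp hlt
  let c := (RelSeries.singleton _ b : LTSeries (PrimeSpectrum R)).cons a hab
  have hH := H c le_rfl
  exact hH

end ChainCond


section Frob
variable {R : Type*} [CommRing R]

lemma frobPow_mem {I : Ideal R} {x : R} (hx : x ∈ I) (q : ℕ) : x ^ q ∈ frobPow I q :=
  Ideal.subset_span ⟨x, hx, rfl⟩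

lemma span_pow_le_frobPow (I : Ideal R) (q : ℕ) :
    ∀ c : Finset R, ↑c ⊆ (I : Set R) →
      Ideal.span (c : Set R) ^ (c.card * q + 1) ≤ frobPow I q := by
  classical
  intro c
  induction c using Finset.induction_on with
  | empty =>
    intro _
    rw [Finset.coe_empty, Ideal.span_empty, Finset.card_empty]
    simpa using bot_le
  | @insert a s ha ih =>
    intro hsub
    have hsub' : ↑s ⊆ (I : Set R) := fun z hz => hsub (by simp [hz])
    have haI : a ∈ I := hsub (by simp)
    rw [Finset.coe_insert,
      show Ideal.span (insert a (↑s : Set R)) = Ideal.span {a} ⊔ Ideal.span ↑s from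
        Submodule.span_insert a ↑s,
      Finset.card_insert_of_notMem ha,
      show (s.card + 1) * q + 1 = q + (s.card * q + 1) by ring]
    refine le_trans Ideal.sup_pow_add_le_pow_sup_pow (sup_le ?_ (ih hsub'))
    rw [Ideal.span_singleton_pow, Ideal.span_le]
    exact Set.singleton_subset_iff.mpr (frobPow_mem haI q)

lemma pow_le_frobPow [IsNoetherianRing R] (I : Ideal R) :
    ∃ μ : ℕ, ∀ q : ℕ, q ≠ 0 → I ^ ((μ + 1) * q) ≤ frobPow I q := by
  obtain ⟨c, hspan⟩ := (IsNoetherian.noetherian I)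
  refine ⟨c.card, fun q hq => ?_⟩
  have hspan' : Ideal.span (↑c : Set R) = I := hspan
  have hsub : ↑c ⊆ (I : Set R) := by rw [← hspan']; exact Ideal.subset_span
  have h1 : Ideal.span (↑c : Set R) ^ (c.card * q + 1) ≤ frobPow I q :=
    span_pow_le_frobPow I q c hsub
  rw [hspan'] at h1
  refine le_trans (Ideal.pow_le_pow_right ?_) h1
  have : (c.card + 1) * q = c.card * q + q := by ring
  omega

lemma smul_top_eq (W : Ideal R) : (W • ⊤ : Submodule R R) = W := by
  refine le_antisymm (Submodule.smul_le.mpr fun w hw m _ => ?_) (fun a ha => ?_)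
  · simpa [smul_eq_mul] using W.mul_mem_right m hw
  · have h2 := Submodule.smul_mem_smul ha (Submodule.mem_top (x := (1 : R)))
    have h3 : a • (1 : R) = a := by rw [smul_eq_mul, mul_one]
    rwa [h3] at h2

end Frob

section Ann
variable {R : Type*} [CommRing R] {M M' : Type*} [AddCommGroup M] [Module R M]
  [AddCommGroup M'] [Module R M']

lemma le_annihilator_quotient (J : Ideal R) : J ≤ Module.annihilator R (R ⧸ J) := by
  intro a ha
  rw [Module.mem_annihilator]
  intro m
  obtain ⟨b, rfl⟩ := Submodule.mkQ_surjective (J : Submodule R R) m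
  rw [← map_smul, Submodule.mkQ_apply, Submodule.Quotient.mk_eq_zero]
  simpa [smul_eq_mul] using J.mul_mem_right b ha

lemma annihilator_congr (e : M ≃ₗ[R] M') :
    Module.annihilator R M = Module.annihilator R M' := by
  ext r
  rw [Module.mem_annihilator, Module.mem_annihilator]
  constructor
  · intro h m
    have h2 : e (r • e.symm m) = e 0 := congrArg e (h (e.symm m))
    rwa [map_smul, e.apply_symm_apply, map_zero] at h2
  · intro h m
    have h2 : e.symm (r • e m) = e.symm 0 := congrArg e.symm (h (e m))
    rwa [map_smul, e.symm_apply_apply, map_zero] at h2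

lemma annihilator_quot_mono {T T' : Submodule R M} (h : T ≤ T') :
    Module.annihilator R (M ⧸ T) ≤ Module.annihilator R (M ⧸ T') := by
  intro r hr
  rw [Module.mem_annihilator] at hr ⊢
  intro z
  obtain ⟨w, rfl⟩ := Submodule.mkQ_surjective T' z
  have h1 := hr (T.mkQ w)
  rw [← map_smul, Submodule.mkQ_apply, Submodule.Quotient.mk_eq_zero] at h1
  rw [← map_smul, Submodule.mkQ_apply, Submodule.Quotient.mk_eq_zero]
  exact h h1

lemma mlen_quot_le_simple [IsSimpleModule R M] (X : Submodule R M) : mlen R (M ⧸ X) ≤ 1 :=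
  (mlen_le_of_surjective X.mkQ (Submodule.mkQ_surjective X)).trans mlen_le_one_of_simple

end Ann


section Main
universe u v
variable {R : Type u} [CommRing R] [IsNoetherianRing R]

theorem devissage (I : Ideal R) (d : ℕ)
    (HSP : ∀ p : Ideal R, p.IsPrime → chainCond R p d →
      ∃ C : ℕ, 0 < C ∧ ∀ s : ℕ,
        mlen R ((R ⧸ p) ⧸ (I ^ s • ⊤ : Submodule R (R ⧸ p))) ≤ (C * (s + 1) ^ d : ℕ))
    (M : Type v) [AddCommGroup M] [Module R M] [IsNoetherian R M]
    (hcc : chainCond R (Module.annihilator R M) d) :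
    ∃ C : ℕ, 0 < C ∧ ∀ s : ℕ,
      mlen R (M ⧸ (I ^ s • ⊤ : Submodule R M)) ≤ (C * (s + 1) ^ d : ℕ) := by
  suffices H : ∀ T : Submodule R M, chainCond R (Module.annihilator R (M ⧸ T)) d →
      ∃ C : ℕ, 0 < C ∧ ∀ s : ℕ,
        mlen R ((M ⧸ T) ⧸ (I ^ s • ⊤ : Submodule R (M ⧸ T))) ≤ (C * (s + 1) ^ d : ℕ) by
    have e0 : (M ⧸ (⊥ : Submodule R M)) ≃ₗ[R] M := Submodule.quotEquivOfEqBot ⊥ rfl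
    obtain ⟨C, hC, hb⟩ := H ⊥ (by rw [annihilator_congr e0]; exact hcc)
    exact ⟨C, hC, fun s => by rw [← mlen_quot_smul_equiv e0 (I ^ s)]; exact hb s⟩
  have wf : WellFounded ((· > ·) : Submodule R M → Submodule R M → Prop) :=
    isNoetherian_iff.mp inferInstance
  intro T
  refine wf.induction
    (C := fun T => chainCond R (Module.annihilator R (M ⧸ T)) d →
      ∃ C : ℕ, 0 < C ∧ ∀ s : ℕ,
        mlen R ((M ⧸ T) ⧸ (I ^ s • ⊤ : Submodule R (M ⧸ T))) ≤ (C * (s + 1) ^ d : ℕ)) T ?_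
  clear T
  intro T ih hccT
  by_cases hT : T = ⊤
  · subst hT
    haveI : Subsingleton (M ⧸ (⊤ : Submodule R M)) :=
      Submodule.Quotient.subsingleton_iff.mpr rfl
    refine ⟨1, one_pos, fun s => ?_⟩
    have h0 : mlen R ((M ⧸ (⊤ : Submodule R M)) ⧸ (I ^ s • ⊤)) ≤
        mlen R (M ⧸ (⊤ : Submodule R M)) :=
      mlen_le_of_surjective _ (Submodule.mkQ_surjective _)
    rw [mlen_subsingleton (M := M ⧸ (⊤ : Submodule R M))] at h0
    exact h0.trans zero_le
  · haveI hnt : Nontrivial (M ⧸ T) :=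
      Submodule.Quotient.nontrivial_iff.mpr hT
    obtain ⟨x, hx⟩ := exists_ne (0 : M ⧸ T)
    obtain ⟨p, hpass, -⟩ := exists_le_isAssociatedPrime_of_isNoetherianRing R x hx
    obtain ⟨hp, y, hy⟩ := isAssociatedPrime_iff.mp hpass
    rw [show Submodule.colon ⊥ {y} = (R ∙ y).annihilator from Submodule.ext fun r => by
      rw [Submodule.mem_annihilator_span_singleton, Submodule.mem_colon]; simp] at hy
    have hy0 : y ≠ 0 := by
      rintro rfl
      rw [Submodule.span_zero_singleton, Submodule.annihilator_bot] at hy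
      exact hp.ne_top hy
    set S := LinearMap.range (LinearMap.toSpanSingleton R (M ⧸ T) y) with hS
    have hker : LinearMap.ker (LinearMap.toSpanSingleton R (M ⧸ T) y) = p := by
      ext r
      rw [LinearMap.mem_ker, LinearMap.toSpanSingleton_apply, hy,
        Submodule.mem_annihilator_span_singleton]
    have e : (R ⧸ p) ≃ₗ[R] ↥S :=
      (Submodule.quotEquivOfEq p _ hker.symm).trans
        (LinearMap.quotKerEquivRange (LinearMap.toSpanSingleton R (M ⧸ T) y))
    set T' := Submodule.comap T.mkQ S with hT'
    have hTT' : T < T' := by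
      refine lt_of_le_of_ne ?_ ?_
      · intro m hm
        rw [hT', Submodule.mem_comap]
        have hm0 : T.mkQ m = 0 := by
          rw [Submodule.mkQ_apply, Submodule.Quotient.mk_eq_zero]; exact hm
        rw [hm0]; exact S.zero_mem
      · intro hcon
        obtain ⟨m, hm⟩ := Submodule.mkQ_surjective T y
        have hmem : m ∈ T' := by
          rw [hT', Submodule.mem_comap, hm]
          exact ⟨1, by rw [LinearMap.toSpanSingleton_apply, one_smul]⟩
        rw [← hcon] at hmem
        apply hy0
        rw [← hm, Submodule.mkQ_apply, Submodule.Quotient.mk_eq_zero]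
        exact hmem
    obtain ⟨CQ, hCQ, hbQ⟩ := ih T' hTT' (chainCond_mono (annihilator_quot_mono hTT'.le) hccT)
    have hannp : Module.annihilator R (M ⧸ T) ≤ p := by
      rw [hy]; intro r hr
      rw [Submodule.mem_annihilator]
      intro n _
      exact Module.mem_annihilator.mp hr n
    obtain ⟨CS, hCS, hbS⟩ := HSP p hp (chainCond_mono hannp hccT)
    refine ⟨CS + CQ, by omega, fun s => ?_⟩
    have hU : ∀ u ∈ (I ^ s • ⊤ : Submodule R ↥S),
        S.subtype u ∈ (I ^ s • ⊤ : Submodule R (M ⧸ T)) := by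
      intro u hu
      refine Submodule.smul_induction_on hu (fun w hw v _ => ?_) (fun u1 u2 h1 h2 => ?_)
      · rw [map_smul]
        exact Submodule.smul_mem_smul hw Submodule.mem_top
      · rw [map_add]; exact add_mem h1 h2
    have hdev := mlen_devissage (I ^ s) S S.subtype (Submodule.range_subtype S)
      (I ^ s • ⊤ : Submodule R ↥S) hU
    have hSbound : mlen R (↥S ⧸ (I ^ s • ⊤ : Submodule R ↥S)) ≤ ((CS * (s + 1) ^ d : ℕ) : ℕ∞) := by
      rw [← mlen_quot_smul_equiv e (I ^ s)]
      exact hbS s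
    have hQeq : mlen R (((M ⧸ T) ⧸ S) ⧸ (I ^ s • ⊤ : Submodule R ((M ⧸ T) ⧸ S)))
        = mlen R ((M ⧸ T') ⧸ (I ^ s • ⊤ : Submodule R (M ⧸ T'))) := by
      have hmapT' : Submodule.map T.mkQ T' = S :=
        Submodule.map_comap_eq_of_surjective (Submodule.mkQ_surjective T) S
      have e2 := Submodule.quotientQuotientEquivQuotient T T' hTT'.le
      rw [hmapT'] at e2
      exact mlen_quot_smul_equiv e2 (I ^ s)
    rw [hQeq] at hdev
    refine hdev.trans (le_trans (add_le_add hSbound (hbQ s)) ?_)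
    rw [← Nat.cast_add, Nat.cast_le, ← add_mul]

theorem simple_case [IsLocalRing R] (I : Ideal R) (d : ℕ) :
    ∃ C : ℕ, 0 < C ∧ ∀ s : ℕ,
      mlen R ((R ⧸ (maximalIdeal R : Ideal R)) ⧸
        (I ^ s • ⊤ : Submodule R (R ⧸ (maximalIdeal R : Ideal R)))) ≤ (C * (s + 1) ^ d : ℕ) := by
  refine ⟨1, one_pos, fun s => ?_⟩
  haveI : IsSimpleModule R (R ⧸ (maximalIdeal R : Ideal R)) :=
    isSimpleModule_iff_isCoatom.mpr (Ideal.isMaximal_def.mp (maximalIdeal.isMaximal R))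
  refine (mlen_quot_le_simple _).trans ?_
  have h1 : (1 : ℕ) ≤ 1 * (s + 1) ^ d := by
    rw [one_mul]; exact Nat.one_le_pow _ _ (by omega)
  exact_mod_cast h1

theorem prime_succ [IsLocalRing R] (I : Ideal R) (hprim : I.radical = maximalIdeal R) (d : ℕ)
    (IH : ∀ (M : Type u) [AddCommGroup M] [Module R M] [IsNoetherian R M],
      chainCond R (Module.annihilator R M) d → ∃ C : ℕ, 0 < C ∧ ∀ s : ℕ,
        mlen R (M ⧸ (I ^ s • ⊤ : Submodule R M)) ≤ (C * (s + 1) ^ d : ℕ))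
    (p : Ideal R) (hp : p.IsPrime) (hcc : chainCond R p (d + 1)) :
    ∃ C : ℕ, 0 < C ∧ ∀ s : ℕ,
      mlen R ((R ⧸ p) ⧸ (I ^ s • ⊤ : Submodule R (R ⧸ p))) ≤ (C * (s + 1) ^ (d + 1) : ℕ) := by
  by_cases hpm : p = maximalIdeal R
  · subst hpm
    exact simple_case I (d + 1)
  · have hxI : ∃ x ∈ I, x ∉ p := by
      by_contra hcon
      push_neg at hcon
      apply hpm
      refine le_antisymm (le_maximalIdeal hp.ne_top) ?_
      rw [← hprim]
      have h1 := Ideal.radical_mono (fun z hz => hcon z hz : I ≤ p)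
      rwa [hp.radical] at h1
    obtain ⟨x, hxI, hxp⟩ := hxI
    set J' := p ⊔ Ideal.span {x} with hJ'
    have hxJ' : x ∈ J' := Submodule.mem_sup_right (Ideal.subset_span rfl)
    have hccJ' : chainCond R (Module.annihilator R (R ⧸ J')) d := by
      refine chainCond_mono (le_annihilator_quotient J') ?_
      intro c hc
      have hhead : (⟨p, hp⟩ : PrimeSpectrum R) < c.head := by
        rw [← PrimeSpectrum.asIdeal_lt_asIdeal]
        refine lt_of_le_of_ne (le_trans le_sup_left hc) fun hcon => hxp ?_
        have hxh : x ∈ (RelSeries.head c).asIdeal := hc hxJ'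
        rwa [← hcon] at hxh
      have hlen := hcc (c.cons ⟨p, hp⟩ hhead) (by rw [RelSeries.head_cons])
      have hlen2 := RelSeries.cons_length c (⟨p, hp⟩ : PrimeSpectrum R) hhead
      omega
    obtain ⟨C', hC', hb'⟩ := IH (R ⧸ J') hccJ'
    set ψ : (R ⧸ p) →ₗ[R] (R ⧸ p) := x • (LinearMap.id) with hψ
    set S := LinearMap.range ψ with hS
    have hψ_apply : ∀ z : R ⧸ p, ψ z = x • z := fun z => rfl
    have hmk_smul : ∀ a : R, (p : Submodule R R).mkQ (x * a) = x • (p : Submodule R R).mkQ a := by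
      intro a
      rw [← map_smul, smul_eq_mul]
    have hSeq : S = Submodule.map (p : Submodule R R).mkQ (J' : Submodule R R) := by
      ext z
      constructor
      · rintro ⟨u, rfl⟩
        obtain ⟨a, rfl⟩ := Submodule.mkQ_surjective (p : Submodule R R) u
        refine ⟨x * a, ?_, ?_⟩
        · exact J'.mul_mem_right a hxJ'
        · rw [hmk_smul a]; exact (hψ_apply _).symm
      · rintro ⟨w, hw, rfl⟩
        obtain ⟨yb, hyb, z, hz, rfl⟩ := Submodule.mem_sup.mp hw
        obtain ⟨a, rfl⟩ := Ideal.mem_span_singleton'.mp hz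
        refine ⟨(p : Submodule R R).mkQ a, ?_⟩
        rw [hψ_apply, ← hmk_smul a]
        have hyb0 : (p : Submodule R R).mkQ yb = 0 := by
          rw [Submodule.mkQ_apply, Submodule.Quotient.mk_eq_zero]; exact hyb
        rw [map_add, hyb0, zero_add, mul_comm]
    have key : ∀ s : ℕ, mlen R ((R ⧸ p) ⧸ (I ^ s • ⊤ : Submodule R (R ⧸ p)))
        ≤ ((C' * s * (s + 1) ^ d : ℕ) : ℕ∞) := by
      intro s
      induction s with
      | zero =>
        have htop : (I ^ 0 • ⊤ : Submodule R (R ⧸ p)) = ⊤ := by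
          rw [pow_zero, Ideal.one_eq_top, Submodule.top_smul]
        rw [htop]
        haveI : Subsingleton ((R ⧸ p) ⧸ (⊤ : Submodule R (R ⧸ p))) :=
          Submodule.Quotient.subsingleton_iff.mpr rfl
        rw [mlen_subsingleton]
        exact zero_le
      | succ s ihs =>
        have hUs : ∀ u ∈ (I ^ s • ⊤ : Submodule R (R ⧸ p)),
            ψ u ∈ (I ^ (s + 1) • ⊤ : Submodule R (R ⧸ p)) := by
          intro u hu
          refine Submodule.smul_induction_on hu (fun w hw v _ => ?_) (fun u1 u2 h1 h2 => ?_)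
          · rw [hψ_apply, smul_smul]
            refine Submodule.smul_mem_smul ?_ Submodule.mem_top
            rw [pow_succ']
            exact Ideal.mul_mem_mul hxI hw
          · rw [map_add]; exact add_mem h1 h2
        have hdev := mlen_devissage (I ^ (s + 1)) S ψ hS.symm
          (I ^ s • ⊤ : Submodule R (R ⧸ p)) hUs
        have hple : (p : Submodule R R) ≤ (J' : Submodule R R) := by
          rw [hJ']; exact le_sup_left
        have e2 := Submodule.quotientQuotientEquivQuotient
          (p : Submodule R R) (J' : Submodule R R) hple
        rw [← hSeq] at e2
        have h2 := mlen_quot_smul_equiv e2 (I ^ (s + 1))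
        rw [h2] at hdev
        refine hdev.trans (le_trans (add_le_add ihs (hb' (s + 1))) ?_)
        rw [← Nat.cast_add, Nat.cast_le]
        calc C' * s * (s + 1) ^ d + C' * (s + 1 + 1) ^ d
            ≤ C' * s * (s + 1 + 1) ^ d + C' * (s + 1 + 1) ^ d := by
              have hpow : (s + 1) ^ d ≤ (s + 1 + 1) ^ d := Nat.pow_le_pow_left (by omega) d
              exact Nat.add_le_add_right (Nat.mul_le_mul_left _ hpow) _
          _ = C' * (s + 1) * (s + 1 + 1) ^ d := by ring
    refine ⟨C', hC', fun s => (key s).trans ?_⟩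
    rw [Nat.cast_le]
    calc C' * s * (s + 1) ^ d ≤ C' * (s + 1) * (s + 1) ^ d :=
          Nat.mul_le_mul_right _ (Nat.mul_le_mul_left _ (by omega))
      _ = C' * (s + 1) ^ (d + 1) := by ring

theorem HS [IsLocalRing R] (I : Ideal R) (hprim : I.radical = maximalIdeal R) :
    ∀ (d : ℕ) (M : Type u) [AddCommGroup M] [Module R M] [IsNoetherian R M],
      chainCond R (Module.annihilator R M) d →
      ∃ C : ℕ, 0 < C ∧ ∀ s : ℕ,
        mlen R (M ⧸ (I ^ s • ⊤ : Submodule R M)) ≤ (C * (s + 1) ^ d : ℕ) := by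
  intro d
  induction d with
  | zero =>
    intro M _ _ _ hcc
    refine devissage I 0 ?_ M hcc
    intro p hp hccp
    by_cases hpm : p = maximalIdeal R
    · subst hpm
      exact simple_case I 0
    · exact absurd (one_le_of_chainCond_ne hp hpm hccp) (by omega)
  | succ d IHd =>
    intro M _ _ _ hcc
    exact devissage I (d + 1)
      (fun p hp hccp => prime_succ I hprim d (fun M' _ _ _ h => IHd M' h) p hp hccp) M hcc

end Main


section Glue
variable {R : Type*} [CommRing R] {M : Type*} [AddCommGroup M] [Module R M]

lemma smul_top_eq_bot_of_le_ann {W : Ideal R} (h : W ≤ Module.annihilator R M) :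
    (W • ⊤ : Submodule R M) = ⊥ := by
  refine le_bot_iff.mp (Submodule.smul_le.mpr fun w hw m _ => ?_)
  rw [Submodule.mem_bot]
  exact Module.mem_annihilator.mp (h hw) m

end Glue

end Stmt8

open Stmt8 in
theorem stmt_8 (R : Type*) [CommRing R] [IsNoetherianRing R] [IsLocalRing R]
    (p : ℕ) (hp : p.Prime) [CharP R p] (N I : Ideal R)
    (hprim : I.radical = maximalIdeal R)
    (dN : ℕ) (hdN : ringKrullDim (R ⧸ Module.annihilator R ↥N) = dN) :
    ∃ β : ℝ, 0 < β ∧ ∀ e : ℕ, ∃ m n : ℕ,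
      mlen R (R ⧸ frobPow I (p ^ e)) = m ∧
      mlen (R ⧸ N) ((R ⧸ N) ⧸ Ideal.map (Ideal.Quotient.mk N) (frobPow I (p ^ e))) = n ∧
      n ≤ m ∧ (m : ℝ) - (n : ℝ) ≤ β * (p : ℝ) ^ (e * dN) := by
  classical
  obtain ⟨μ, hμ⟩ := pow_le_frobPow I
  have hccN : chainCond R (Module.annihilator R ↥N) dN :=
    chainCond_of_ringKrullDim (le_of_eq hdN)
  obtain ⟨C, hC0, hbN⟩ := HS I hprim dN ↥N hccN
  refine ⟨((C * (2 * (μ + 1)) ^ dN : ℕ) : ℝ), ?_, fun e => ?_⟩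
  · have : 0 < C * (2 * (μ + 1)) ^ dN := Nat.mul_pos hC0 (pow_pos (by omega) dN)
    exact_mod_cast this
  set q := p ^ e with hqdef
  have hq0 : q ≠ 0 := Nat.pos_iff_ne_zero.mp (pow_pos hp.pos e)
  set J := frobPow I q with hJdef
  set sq := (μ + 1) * q with hsqdef
  have hsq0 : sq ≠ 0 := Nat.mul_ne_zero (by omega) hq0
  have hsJ : I ^ sq ≤ J := hμ q hq0
  -- finiteness of the length of R ⧸ J
  have hcc0 : chainCond R (Module.annihilator R (R ⧸ (I ^ sq : Ideal R))) 0 :=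
    chainCond_mono (le_annihilator_quotient _) (chainCond_pow_zero hprim hsq0)
  obtain ⟨C₀, hC₀, hb₀⟩ := HS I hprim 0 (R ⧸ (I ^ sq : Ideal R)) hcc0
  have hfin1 : mlen R (R ⧸ (I ^ sq : Ideal R)) ≤ ((C₀ * (sq + 1) ^ 0 : ℕ) : ℕ∞) := by
    have hb := hb₀ sq
    rw [smul_top_eq_bot_of_le_ann (M := R ⧸ (I ^ sq : Ideal R)) (le_annihilator_quotient (I ^ sq))] at hb
    rwa [mlen_eq_of_linearEquiv (Submodule.quotEquivOfEqBot ⊥ rfl)] at hb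
  have hsurj : Function.Surjective
      (Submodule.mapQ ((I ^ sq : Ideal R) : Submodule R R) (J : Submodule R R) LinearMap.id
        (by rw [Submodule.comap_id]; exact hsJ)) := by
    intro z
    obtain ⟨b, rfl⟩ := Submodule.mkQ_surjective (J : Submodule R R) z
    exact ⟨((I ^ sq : Ideal R) : Submodule R R).mkQ b, by
      rw [Submodule.mkQ_apply, Submodule.mkQ_apply, Submodule.mapQ_apply, LinearMap.id_apply]⟩
  have hmfin : mlen R (R ⧸ (J : Ideal R)) ≤ mlen R (R ⧸ (I ^ sq : Ideal R)) :=
    mlen_le_of_surjective _ hsurj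
  set JA : Ideal (R ⧸ N) := Ideal.map (Ideal.Quotient.mk N) J with hJA
  -- n ≤ m
  have hnm : mlen (R ⧸ N) ((R ⧸ N) ⧸ (JA : Ideal (R ⧸ N))) ≤ mlen R (R ⧸ (J : Ideal R)) := by
    let F1 := Submodule.comapMkQRelIso (JA : Submodule (R ⧸ N) (R ⧸ N))
    let g : {T : Ideal (R ⧸ N) // JA ≤ T} → {T : Ideal R // (J : Ideal R) ≤ T} := fun T =>
      ⟨Ideal.comap (Ideal.Quotient.mk N) T.1, le_trans Ideal.le_comap_map (Ideal.comap_mono T.2)⟩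
    have hg : StrictMono g := by
      intro a b hab
      have hab' : a.1 < b.1 := hab
      refine Subtype.mk_lt_mk.mpr (lt_of_le_of_ne (Ideal.comap_mono hab'.le) fun hcon => hab'.ne ?_)
      have h2 := congrArg (Ideal.map (Ideal.Quotient.mk N)) hcon
      rwa [Ideal.map_comap_of_surjective _ Ideal.Quotient.mk_surjective,
        Ideal.map_comap_of_surjective _ Ideal.Quotient.mk_surjective] at h2
    let F2 := (Submodule.comapMkQRelIso (J : Submodule R R)).symm
    exact mlen_le_of_strictMono (fun T => F2 (g (F1 T)))
      (F2.strictMono.comp (hg.comp F1.strictMono))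
  -- m ≤ k + n
  set K := Submodule.map ((J : Ideal R) : Submodule R R).mkQ ((N : Ideal R) : Submodule R R)
    with hK
  have hadd := mlen_add (M := R ⧸ (J : Ideal R)) K
  have hquot_le : mlen R ((R ⧸ (J : Ideal R)) ⧸ K) ≤
      mlen (R ⧸ N) ((R ⧸ N) ⧸ (JA : Ideal (R ⧸ N))) := by
    have hmap : Submodule.map ((J : Ideal R) : Submodule R R).mkQ
        (((N ⊔ J : Ideal R)) : Submodule R R) = K := by
      rw [Submodule.map_sup, map_mkQ_self, sup_bot_eq]
    have e2 := Submodule.quotientQuotientEquivQuotient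
      ((J : Ideal R) : Submodule R R) (((N ⊔ J : Ideal R)) : Submodule R R) le_sup_right
    rw [hmap] at e2
    rw [mlen_eq_of_linearEquiv e2]
    let F3 := Submodule.comapMkQRelIso (((N ⊔ J : Ideal R)) : Submodule R R)
    let g' : {T : Ideal R // N ⊔ J ≤ T} → {T : Ideal (R ⧸ N) // JA ≤ T} := fun T =>
      ⟨Ideal.map (Ideal.Quotient.mk N) T.1, Ideal.map_mono (le_trans le_sup_right T.2)⟩
    have hg' : StrictMono g' := by
      intro a b hab
      have hab' : a.1 < b.1 := hab
      have hcomap : ∀ T : {T : Ideal R // N ⊔ J ≤ T},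
          Ideal.comap (Ideal.Quotient.mk N) (Ideal.map (Ideal.Quotient.mk N) T.1) = T.1 := by
        intro T
        rw [Ideal.comap_map_of_surjective _ Ideal.Quotient.mk_surjective,
          ← RingHom.ker_eq_comap_bot, Ideal.mk_ker]
        exact sup_eq_left.mpr (le_trans le_sup_left T.2)
      refine Subtype.mk_lt_mk.mpr (lt_of_le_of_ne (Ideal.map_mono hab'.le) fun hcon => hab'.ne ?_)
      have h2 := congrArg (Ideal.comap (Ideal.Quotient.mk N)) hcon
      rwa [hcomap a, hcomap b] at h2
    let F4 := (Submodule.comapMkQRelIso (JA : Submodule (R ⧸ N) (R ⧸ N))).symm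
    exact mlen_le_of_strictMono (fun T => F4 (g' (F3 T)))
      (F4.strictMono.comp (hg'.comp F3.strictMono))
  have hk : mlen R ↥K ≤ mlen R (↥(N : Submodule R R) ⧸
      (I ^ sq • ⊤ : Submodule R ↥(N : Submodule R R))) := by
    set ψ : ↥((N : Ideal R) : Submodule R R) →ₗ[R] (R ⧸ (J : Ideal R)) :=
      ((J : Ideal R) : Submodule R R).mkQ ∘ₗ ((N : Ideal R) : Submodule R R).subtype with hψ
    have hrange : LinearMap.range ψ = K := by
      rw [hψ, LinearMap.range_comp, Submodule.range_subtype]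
    have hUk : (I ^ sq • ⊤ : Submodule R ↥((N : Ideal R) : Submodule R R)) ≤
        LinearMap.ker ψ := by
      intro u hu
      refine Submodule.smul_induction_on hu (fun w hw v _ => ?_) (fun a b ha hb => ?_)
      · rw [LinearMap.mem_ker, hψ, LinearMap.comp_apply]
        have hcoe : (((N : Ideal R) : Submodule R R).subtype) (w • v) = w * (v : R) := by
          rw [map_smul, Submodule.coe_subtype, smul_eq_mul]
        rw [hcoe, Submodule.mkQ_apply, Submodule.Quotient.mk_eq_zero]
        exact (J : Ideal R).mul_mem_right _ (hsJ hw)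
      · rw [LinearMap.mem_ker, map_add]
        rw [LinearMap.mem_ker] at ha hb
        rw [ha, hb, add_zero]
    rw [← hrange]
    exact mlen_range_le ψ _ hUk
  have hbound := hbN sq
  -- assemble
  have hmfin2 : mlen R (R ⧸ (J : Ideal R)) ≠ ⊤ :=
    (lt_of_le_of_lt (hmfin.trans hfin1) (ENat.coe_lt_top _)).ne
  have hnfin2 : mlen (R ⧸ N) ((R ⧸ N) ⧸ (JA : Ideal (R ⧸ N))) ≠ ⊤ :=
    (lt_of_le_of_lt (hnm.trans (hmfin.trans hfin1)) (ENat.coe_lt_top _)).ne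
  refine ⟨(mlen R (R ⧸ (J : Ideal R))).toNat,
    (mlen (R ⧸ N) ((R ⧸ N) ⧸ (JA : Ideal (R ⧸ N)))).toNat,
    (ENat.coe_toNat hmfin2).symm, (ENat.coe_toNat hnfin2).symm, ?_, ?_⟩
  · have h := hnm
    rw [← ENat.coe_toNat hmfin2, ← ENat.coe_toNat hnfin2] at h
    exact_mod_cast h
  · set m := (mlen R (R ⧸ (J : Ideal R))).toNat
    set n := (mlen (R ⧸ N) ((R ⧸ N) ⧸ (JA : Ideal (R ⧸ N)))).toNat
    have hmE : (m : ℕ∞) ≤ ((C * (sq + 1) ^ dN : ℕ) : ℕ∞) + (n : ℕ∞) := by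
      rw [ENat.coe_toNat hmfin2, ENat.coe_toNat hnfin2]
      exact hadd.trans (add_le_add (hk.trans hbound) hquot_le)
    have hmn : m ≤ C * (sq + 1) ^ dN + n := by exact_mod_cast hmE
    have hpow : (sq + 1) ^ dN ≤ (2 * (μ + 1)) ^ dN * p ^ (e * dN) := by
      have h1 : sq + 1 ≤ 2 * (μ + 1) * q := by
        have h2 : 1 ≤ (μ + 1) * q := Nat.one_le_iff_ne_zero.mpr hsq0
        have h4 : 2 * (μ + 1) * q = 2 * ((μ + 1) * q) := by ring
        rw [h4, hsqdef]
        omega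
      calc (sq + 1) ^ dN ≤ (2 * (μ + 1) * q) ^ dN := Nat.pow_le_pow_left h1 dN
        _ = (2 * (μ + 1)) ^ dN * q ^ dN := by rw [mul_pow]
        _ = (2 * (μ + 1)) ^ dN * p ^ (e * dN) := by rw [hqdef, ← pow_mul]
    have hfinal : m ≤ C * ((2 * (μ + 1)) ^ dN * p ^ (e * dN)) + n := by
      refine hmn.trans ?_
      exact Nat.add_le_add_right (Nat.mul_le_mul le_rfl hpow) n
    have hreal : (m : ℝ) ≤ (C * (2 * (μ + 1)) ^ dN : ℕ) * (p : ℝ) ^ (e * dN) + n := by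
      have : (m : ℝ) ≤ ((C * ((2 * (μ + 1)) ^ dN * p ^ (e * dN)) + n : ℕ) : ℝ) := by
        exact_mod_cast hfinal
      push_cast at this ⊢
      linarith
    linarith

end
end

section
/- Let R be a reduced Noetherian ring of prime characteristic p and let I be an ideal of R. For each q = p^e define J_q = {x ∈ R : φ(x) ∈ I for every additive map φ : R → R satisfying φ(r^{p^e}·y) = r·φ(y) for all r, y ∈ R}. Then each J_q is an ideal of R and J_• = {J_q} is a p-family, i.e., J_q^{[p]} ⊆ J_{pq} for all q. -/
/-!
Statement 15 (Example 4.5): for a reduced Noetherian ring `R` of prime characteristic `p`,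
an ideal `I`, and `J_q = {x ∈ R : φ(x) ∈ I for every additive φ : R → R with
φ(r^{p^e}y) = r·φ(y)}` (`q = p^e`), each `J_q` is an ideal and `J_•` is a `p`-family:
`J_q^{[p]} ⊆ J_{pq}`.
-/

open Filter IsLocalRing

noncomputable section

theorem stmt_15 (R : Type*) [CommRing R] [IsNoetherianRing R] [IsReduced R]
    (p : ℕ) (hp : p.Prime) [CharP R p] (I : Ideal R) :
    (∀ e : ℕ, ∃ J : Ideal R,
      (J : Set R) =
        {x : R | ∀ φ : R →+ R, (∀ r y : R, φ (r ^ p ^ e * y) = r * φ y) → φ x ∈ I}) ∧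
    (∀ e : ℕ, ∀ J J' : Ideal R,
      (J : Set R) =
          {x : R | ∀ φ : R →+ R, (∀ r y : R, φ (r ^ p ^ e * y) = r * φ y) → φ x ∈ I} →
      (J' : Set R) =
          {x : R | ∀ φ : R →+ R, (∀ r y : R, φ (r ^ p ^ (e + 1) * y) = r * φ y) → φ x ∈ I} →
      frobPow J p ≤ J') :=
  by
  haveI : Fact p.Prime := ⟨hp⟩
  constructor
  · intro e
    refine ⟨Submodule.mk (AddSubmonoid.mk (AddSubsemigroup.mk
        {x : R | ∀ φ : R →+ R, (∀ r y : R, φ (r ^ p ^ e * y) = r * φ y) → φ x ∈ I} ?_) ?_) ?_, rfl⟩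
    · intro a b ha hb φ hφ
      rw [map_add]; exact I.add_mem (ha φ hφ) (hb φ hφ)
    · intro φ hφ; rw [map_zero]; exact I.zero_mem
    · intro c x hx φ hφ
      have key : (AddMonoidHom.mk' (fun y => φ (c * y))
          (by intro a b; rw [mul_add, map_add]) : R →+ R) x ∈ I := by
        apply hx
        intro r y
        simp only [AddMonoidHom.mk'_apply]
        rw [show c * (r ^ p ^ e * y) = r ^ p ^ e * (c * y) by ring, hφ]
      simpa using key
  · intro e J J' hJ hJ'
    rw [frobPow, Ideal.span_le]
    rintro _ ⟨x, hx, rfl⟩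
    have hxJ : x ∈ (J : Set R) := hx
    rw [hJ] at hxJ
    show (x ^ p) ∈ (J' : Set R)
    rw [hJ']
    intro φ hφ
    have key : (φ.comp (frobenius R p).toAddMonoidHom) x ∈ I := by
      apply hxJ
      intro r y
      simp only [AddMonoidHom.coe_comp, RingHom.toAddMonoidHom_eq_coe,
        AddMonoidHom.coe_coe, Function.comp_apply, frobenius_def]
      rw [mul_pow, ← pow_mul, ← pow_succ, hφ]
    simpa [frobenius_def] using key

end
end
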